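/- arXiv:0904.2841 — 5 statements merged into one kernel-verified Lean document; each statement's English description precedes it below -/
import Mathlib

section
/- For the root system C_n and the positive root 2ε_i, the set of unordered pairs of positive roots summing to 2ε_i is exactly {ε_i − ε_l, ε_i + ε_l} for i < l ≤ n; in particular there are exactly n − i such pairs. -/
/-- The standard basis vector `ε_i` of `ℝ^n` (indices are 1-based, ambient type `ℕ → ℝ`). -/
noncomputable def eps (i : ℕ) : ℕ → ℝ := fun k => if k = i then 1 else 0

/-- The standard inner product on vectors supported on indices `0, …, n`. -/
noncomputable def ip (n : ℕ) (x y : ℕ → ℝ) : ℝ := ∑ k ∈ Finset.range (n + 1), x k * y k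

/-- Positive roots of `B_n`: `ε_i ± ε_j` for `1 ≤ i < j ≤ n` and `ε_i` for `1 ≤ i ≤ n`. -/
def PosB (n : ℕ) : Set (ℕ → ℝ) :=
  {v | ∃ i j : ℕ, 1 ≤ i ∧ i < j ∧ j ≤ n ∧ (v = eps i - eps j ∨ v = eps i + eps j)} ∪
  {v | ∃ i : ℕ, 1 ≤ i ∧ i ≤ n ∧ v = eps i}

/-- Positive roots of `C_n`: `ε_i ± ε_j` for `1 ≤ i < j ≤ n` and `2ε_i` for `1 ≤ i ≤ n`. -/
def PosC (n : ℕ) : Set (ℕ → ℝ) :=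
  {v | ∃ i j : ℕ, 1 ≤ i ∧ i < j ∧ j ≤ n ∧ (v = eps i - eps j ∨ v = eps i + eps j)} ∪
  {v | ∃ i : ℕ, 1 ≤ i ∧ i ≤ n ∧ v = (2 : ℝ) • eps i}

/-- Positive roots of `D_n`: `ε_i ± ε_j` for `1 ≤ i < j ≤ n`. -/
def PosD (n : ℕ) : Set (ℕ → ℝ) :=
  {v | ∃ i j : ℕ, 1 ≤ i ∧ i < j ∧ j ≤ n ∧ (v = eps i - eps j ∨ v = eps i + eps j)}

/-- The reflection `r_a(x) = x - (2(x,a)/(a,a)) a`. -/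
noncomputable def rfl' (n : ℕ) (a : ℕ → ℝ) : Function.End (ℕ → ℝ) :=
  fun x => x - (2 * ip n x a / ip n a a) • a

/-! ### Auxiliary lemmas -/

lemma case_mm (a b c d i : ℕ) (hab : a < b)
    (h : eps a - eps b + (eps c - eps d) = (2:ℝ) • eps i) : False := by
  have hI := congrFun h i
  have hB := congrFun h b
  simp only [Pi.add_apply, Pi.sub_apply, Pi.smul_apply, smul_eq_mul, eps] at hI hB
  split_ifs at hI hB <;> norm_num at hI <;> norm_num at hB <;> omega

lemma case_pp (a b c d i : ℕ) (hab : a < b) (hcd : c < d)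
    (h : eps a + eps b + (eps c + eps d) = (2:ℝ) • eps i) : False := by
  have hA := congrFun h a
  have hB := congrFun h b
  simp only [Pi.add_apply, Pi.smul_apply, smul_eq_mul, eps] at hA hB
  split_ifs at hA hB <;> norm_num at hA <;> norm_num at hB <;> omega

lemma case_mp (a b c d i : ℕ) (hab : a < b) (hcd : c < d)
    (h : eps a - eps b + (eps c + eps d) = (2:ℝ) • eps i) : a = i ∧ c = i ∧ b = d := by
  have h1 : b = c ∨ b = d := by
    have hB := congrFun h b
    simp only [Pi.add_apply, Pi.sub_apply, Pi.smul_apply, smul_eq_mul, eps] at hB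
    split_ifs at hB <;> norm_num at hB <;> omega
  rcases h1 with h1 | h1
  · exfalso
    subst h1
    have hA := congrFun h a
    have hD := congrFun h d
    simp only [Pi.add_apply, Pi.sub_apply, Pi.smul_apply, smul_eq_mul, eps] at hA hD
    split_ifs at hA hD <;> norm_num at hA <;> norm_num at hD <;> omega
  · subst h1
    have hA := congrFun h a
    have hC := congrFun h c
    simp only [Pi.add_apply, Pi.sub_apply, Pi.smul_apply, smul_eq_mul, eps] at hA hC
    split_ifs at hA hC <;> norm_num at hA <;> norm_num at hC <;> omega

lemma case_2eps (a i : ℕ) (γ : ℕ → ℝ) (n : ℕ) (hγ : γ ∈ PosC n)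
    (h : (2:ℝ) • eps a + γ = (2:ℝ) • eps i) : False := by
  rcases hγ with ⟨c, d, _, hcd, _, hγf | hγf⟩ | ⟨c, _, _, hγf⟩
  · subst hγf
    have hA := congrFun h a
    have hC := congrFun h c
    simp only [Pi.add_apply, Pi.sub_apply, Pi.smul_apply, smul_eq_mul, eps] at hA hC
    split_ifs at hA hC <;> norm_num at hA <;> norm_num at hC <;> omega
  · subst hγf
    have hA := congrFun h a
    have hC := congrFun h c
    simp only [Pi.add_apply, Pi.smul_apply, smul_eq_mul, eps] at hA hC
    split_ifs at hA hC <;> norm_num at hA <;> norm_num at hC <;> omega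
  · subst hγf
    have hA := congrFun h a
    have hC := congrFun h c
    simp only [Pi.add_apply, Pi.smul_apply, smul_eq_mul, eps] at hA hC
    split_ifs at hA hC <;> norm_num at hA <;> norm_num at hC <;> omega

lemma classify (n i : ℕ) (α γ : ℕ → ℝ) (hα : α ∈ PosC n) (hγ : γ ∈ PosC n)
    (h : α + γ = (2:ℝ) • eps i) :
    ∃ l : ℕ, i < l ∧ l ≤ n ∧
      ((α = eps i - eps l ∧ γ = eps i + eps l) ∨ (γ = eps i - eps l ∧ α = eps i + eps l)) := by
  rcases hα with ⟨a, b, ha1, hab, hbn, hαf | hαf⟩ | ⟨a, ha1, han, hαf⟩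
  · -- α = eps a - eps b
    rcases hγ with ⟨c, d, hc1, hcd, hdn, hγf | hγf⟩ | ⟨c, hc1, hcn, hγf⟩
    · exact absurd (hαf ▸ hγf ▸ h) (fun hh => case_mm a b c d i hab hh)
    · obtain ⟨hai, hci, hbd⟩ := case_mp a b c d i hab hcd (hαf ▸ hγf ▸ h)
      exact ⟨b, hai ▸ hab, hbn, Or.inl ⟨by rw [hαf, hai], by rw [hγf, hci, hbd]⟩⟩
    · exact absurd (by rw [add_comm] at h; rw [hγf] at h; exact hαf ▸ h)
        (fun hh => case_2eps c i _ n (Or.inl ⟨a, b, ha1, hab, hbn, Or.inl rfl⟩) hh)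
  · -- α = eps a + eps b
    rcases hγ with ⟨c, d, hc1, hcd, hdn, hγf | hγf⟩ | ⟨c, hc1, hcn, hγf⟩
    · obtain ⟨hci, hai, hdb⟩ := case_mp c d a b i hcd hab
        (by rw [add_comm] at h; exact hγf ▸ hαf ▸ h)
      exact ⟨d, by omega, hdn, Or.inr ⟨by rw [hγf, hci], by rw [hαf, hai, hdb]⟩⟩
    · exact absurd (hαf ▸ hγf ▸ h) (fun hh => case_pp a b c d i hab hcd hh)
    · exact absurd (by rw [add_comm] at h; rw [hγf] at h; exact hαf ▸ h)
        (fun hh => case_2eps c i _ n (Or.inl ⟨a, b, ha1, hab, hbn, Or.inr rfl⟩) hh)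
  · exact absurd (hαf ▸ h) (fun hh => case_2eps a i γ n hγ hh)

lemma pair_sum (i l : ℕ) : (eps i - eps l) + (eps i + eps l) = (2:ℝ) • eps i := by
  funext k
  simp only [Pi.add_apply, Pi.sub_apply, Pi.smul_apply, smul_eq_mul, eps]
  ring

lemma eps_inj {l l' : ℕ} (h : eps l = eps l') : l = l' := by
  by_contra hne
  have := congrFun h l
  simp [eps, hne] at this

lemma pair_inj {i l l' : ℕ} (h : s(eps i - eps l, eps i + eps l) = s(eps i - eps l', eps i + eps l')) :
    l = l' := by
  rw [Sym2.eq_iff] at h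
  rcases h with ⟨h1, _⟩ | ⟨h1, _⟩
  · exact eps_inj (sub_right_inj.mp h1)
  · exfalso
    have := congrFun h1 l'
    simp only [Pi.sub_apply, Pi.add_apply, eps] at this
    split_ifs at this <;> norm_num at this

/-- In `C_n`, the unordered pairs of positive roots summing to `2ε_i` are exactly the pairs
`{ε_i - ε_l, ε_i + ε_l}` for `i < l ≤ n`; in particular there are exactly `n - i` of them. -/
theorem stmt3 (n i : ℕ) (hi : 1 ≤ i) (hn : i ≤ n) :
    {p : Sym2 (ℕ → ℝ) | ∃ α γ : ℕ → ℝ,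
        p = s(α, γ) ∧ α ∈ PosC n ∧ γ ∈ PosC n ∧ α + γ = (2 : ℝ) • eps i}
      = {p : Sym2 (ℕ → ℝ) | ∃ l : ℕ, i < l ∧ l ≤ n ∧ p = s(eps i - eps l, eps i + eps l)} ∧
    Set.ncard {p : Sym2 (ℕ → ℝ) | ∃ α γ : ℕ → ℝ,
        p = s(α, γ) ∧ α ∈ PosC n ∧ γ ∈ PosC n ∧ α + γ = (2 : ℝ) • eps i} = n - i := by
  classical
  have hset : {p : Sym2 (ℕ → ℝ) | ∃ α γ : ℕ → ℝ,
        p = s(α, γ) ∧ α ∈ PosC n ∧ γ ∈ PosC n ∧ α + γ = (2 : ℝ) • eps i}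
      = {p : Sym2 (ℕ → ℝ) | ∃ l : ℕ, i < l ∧ l ≤ n ∧ p = s(eps i - eps l, eps i + eps l)} := by
    ext p
    constructor
    · rintro ⟨α, γ, hp, hα, hγ, h⟩
      obtain ⟨l, hil, hln, hcase⟩ := classify n i α γ hα hγ h
      refine ⟨l, hil, hln, ?_⟩
      rcases hcase with ⟨h1, h2⟩ | ⟨h1, h2⟩
      · rw [hp, h1, h2]
      · rw [hp, h1, h2, Sym2.eq_swap]
    · rintro ⟨l, hil, hln, hp⟩
      refine ⟨eps i - eps l, eps i + eps l, hp, ?_, ?_, pair_sum i l⟩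
      · exact Or.inl ⟨i, l, hi, hil, hln, Or.inl rfl⟩
      · exact Or.inl ⟨i, l, hi, hil, hln, Or.inr rfl⟩
  refine ⟨hset, ?_⟩
  rw [hset]
  have himg : {p : Sym2 (ℕ → ℝ) | ∃ l : ℕ, i < l ∧ l ≤ n ∧ p = s(eps i - eps l, eps i + eps l)}
      = ↑((Finset.Ioc i n).image fun l => s(eps i - eps l, eps i + eps l)) := by
    ext p
    simp only [Finset.coe_image, Set.mem_image, Finset.mem_coe, Finset.mem_Ioc,
      Set.mem_setOf_eq]
    constructor
    · rintro ⟨l, h1, h2, h3⟩; exact ⟨l, ⟨h1, h2⟩, h3.symm⟩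
    · rintro ⟨l, ⟨h1, h2⟩, h3⟩; exact ⟨l, h1, h2, h3.symm⟩
  rw [himg, Set.ncard_coe_finset, Finset.card_image_of_injOn, Nat.card_Ioc]
  intro x _ y _ hxy
  exact pair_inj hxy
end

section
/- In the Weyl group of B_n, C_n, or D_n, for a positive root α of the form ε_i − ε_j or ε_i + ε_j (with i < j, Φ = B_n or D_n), the set of positive roots sent to negative roots by the reflection r_α equals S(α) ∪ {α}, where S(α) is the set of positive roots γ such that α − γ is also a positive root. Consequently the length of r_α equals |S(α)| + 1. -/
noncomputable def rho (n : ℕ) : ℕ → ℝ := fun k => (n : ℝ) + 1 - k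

lemma ip_eps_left {n a : ℕ} (ha : a ≤ n) (y : ℕ → ℝ) : ip n (eps a) y = y a := by
  rw [ip, Finset.sum_eq_single a]
  · simp [eps]
  · intro k _ hk; simp [eps, hk]
  · intro h; exact absurd (Finset.mem_range.mpr (Nat.lt_succ_of_le ha)) h

lemma ip_eps_right {n a : ℕ} (ha : a ≤ n) (y : ℕ → ℝ) : ip n y (eps a) = y a := by
  rw [ip, Finset.sum_eq_single a]
  · simp [eps]
  · intro k _ hk; simp [eps, hk]
  · intro h; exact absurd (Finset.mem_range.mpr (Nat.lt_succ_of_le ha)) h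

lemma ip_add_left {n : ℕ} (x y z : ℕ → ℝ) : ip n (x + y) z = ip n x z + ip n y z := by
  simp [ip, add_mul, Finset.sum_add_distrib]

lemma ip_sub_left {n : ℕ} (x y z : ℕ → ℝ) : ip n (x - y) z = ip n x z - ip n y z := by
  simp [ip, sub_mul, Finset.sum_sub_distrib]

lemma ip_smul_left {n : ℕ} (c : ℝ) (x y : ℕ → ℝ) : ip n (c • x) y = c * ip n x y := by
  simp [ip, Finset.mul_sum, mul_assoc]

lemma ip_add_right {n : ℕ} (x y z : ℕ → ℝ) : ip n x (y + z) = ip n x y + ip n x z := by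
  simp [ip, mul_add, Finset.sum_add_distrib]

lemma ip_smul_right {n : ℕ} (c : ℝ) (x y : ℕ → ℝ) : ip n x (c • y) = c * ip n x y := by
  rw [ip, ip, Finset.mul_sum]
  exact Finset.sum_congr rfl fun k _ => by simp [mul_comm, mul_left_comm]

lemma mem_forms {n : ℕ} {Pos : Set (ℕ → ℝ)} (hPos : Pos = PosB n ∨ Pos = PosD n)
    {v : ℕ → ℝ} (hv : v ∈ Pos) :
    (∃ a b, 1 ≤ a ∧ a < b ∧ b ≤ n ∧ (v = eps a - eps b ∨ v = eps a + eps b)) ∨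
    (∃ a, 1 ≤ a ∧ a ≤ n ∧ v = eps a) := by
  rcases hPos with h | h <;> subst h
  · rcases hv with h | h
    · exact Or.inl h
    · exact Or.inr h
  · exact Or.inl hv

lemma coords {n : ℕ} {Pos : Set (ℕ → ℝ)} (hPos : Pos = PosB n ∨ Pos = PosD n)
    {v : ℕ → ℝ} (hv : v ∈ Pos) (k : ℕ) : v k = -1 ∨ v k = 0 ∨ v k = 1 := by
  rcases mem_forms hPos hv with ⟨a, b, _, _, _, h | h⟩ | ⟨a, _, _, h⟩ <;> subst h <;>
    simp only [eps, Pi.sub_apply, Pi.add_apply] <;> split_ifs <;> first | omega | norm_num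

lemma pos_ip_rho {n : ℕ} {Pos : Set (ℕ → ℝ)} (hPos : Pos = PosB n ∨ Pos = PosD n)
    {v : ℕ → ℝ} (hv : v ∈ Pos) : 0 < ip n v (rho n) := by
  rcases mem_forms hPos hv with ⟨a, b, ha, hab, hb, h | h⟩ | ⟨a, ha, hb, h⟩ <;> subst h
  · rw [ip_sub_left, ip_eps_left (le_trans hab.le hb), ip_eps_left hb]
    have h1 : (a : ℝ) < b := by exact_mod_cast hab
    simp only [rho]; linarith
  · rw [ip_add_left, ip_eps_left (le_trans hab.le hb), ip_eps_left hb]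
    have h1 : (a : ℝ) ≤ n := by exact_mod_cast le_trans hab.le hb
    have h2 : (b : ℝ) ≤ n := by exact_mod_cast hb
    simp only [rho]; linarith
  · rw [ip_eps_left hb]
    have h1 : (a : ℝ) ≤ n := by exact_mod_cast hb
    simp only [rho]; linarith

lemma eq_alpha {n i j : ℕ} (hij : i < j) (hj : j ≤ n) {t : ℝ} (ht : t = 1 ∨ t = -1)
    {Pos : Set (ℕ → ℝ)} (hPos : Pos = PosB n ∨ Pos = PosD n) {β : ℕ → ℝ} (hβ : β ∈ Pos)
    (h1 : β i = 1) (h2 : β j = t) : β = eps i + t • eps j := by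
  rcases ht with rfl | rfl <;>
  rcases mem_forms hPos hβ with ⟨a, b, ha, hab, hb, h | h⟩ | ⟨a, ha, han, h⟩ <;> subst h <;>
  simp only [eps, Pi.sub_apply, Pi.add_apply] at h1 h2 <;>
  split_ifs at h1 h2 <;>
  first
    | omega
    | (exfalso; revert h1 h2; norm_num; done)
    | (funext k
       simp only [eps, Pi.sub_apply, Pi.add_apply, Pi.smul_apply, smul_eq_mul]
       split_ifs <;> first | omega | norm_num)

lemma trich {n i j : ℕ} (hij : i < j) (hj : j ≤ n) {t : ℝ} (ht : t = 1 ∨ t = -1)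
    {α : ℕ → ℝ} (hαt : α = eps i + t • eps j)
    {Pos : Set (ℕ → ℝ)} (hPos : Pos = PosB n ∨ Pos = PosD n) {β : ℕ → ℝ} (hβ : β ∈ Pos) :
    ip n β α ≤ 0 ∨ ip n β α = 1 ∨ (β i = 1 ∧ β j = t ∧ ip n β α = 2) := by
  have hi : i ≤ n := le_trans hij.le hj
  have hc : ip n β α = β i + t * β j := by
    rw [hαt, ip_add_right, ip_smul_right, ip_eps_right hi, ip_eps_right hj]
  rcases coords hPos hβ i with h1 | h1 | h1 <;>
  rcases coords hPos hβ j with h2 | h2 | h2 <;>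
  rcases ht with rfl | rfl <;>
  rw [h1, h2] at hc <;>
  norm_num [hc, h1, h2]

lemma finite_Pos {n : ℕ} {Pos : Set (ℕ → ℝ)} (hPos : Pos = PosB n ∨ Pos = PosD n) :
    Pos.Finite := by
  have h1 : ((fun p : ℕ × ℕ => eps p.1 - eps p.2) '' (Set.Iic n ×ˢ Set.Iic n)).Finite :=
    ((Set.finite_Iic n).prod (Set.finite_Iic n)).image _
  have h2 : ((fun p : ℕ × ℕ => eps p.1 + eps p.2) '' (Set.Iic n ×ˢ Set.Iic n)).Finite :=
    ((Set.finite_Iic n).prod (Set.finite_Iic n)).image _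
  have h3 : (eps '' Set.Iic n).Finite := (Set.finite_Iic n).image _
  apply Set.Finite.subset ((h1.union h2).union h3)
  intro v hv
  rcases mem_forms hPos hv with ⟨a, b, ha, hab, hb, h | h⟩ | ⟨a, ha, hb, h⟩
  · exact Or.inl (Or.inl ⟨(a, b), ⟨le_trans hab.le hb, hb⟩, h.symm⟩)
  · exact Or.inl (Or.inr ⟨(a, b), ⟨le_trans hab.le hb, hb⟩, h.symm⟩)
  · exact Or.inr ⟨a, hb, h.symm⟩

/-- For `Φ ∈ {B_n, D_n}` and a long positive root `α = ε_i ± ε_j` (`i < j`), the set of positive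
roots sent to negative roots by the reflection `r_α` is `S(α) ∪ {α}`, where
`S(α) = {γ ∈ Φ⁺ | α - γ ∈ Φ⁺}`; consequently `l(r_α) = |S(α)| + 1`. -/
theorem stmt5 (n i j : ℕ) (hi : 1 ≤ i) (hij : i < j) (hj : j ≤ n)
    (Pos : Set (ℕ → ℝ)) (hPos : Pos = PosB n ∨ Pos = PosD n)
    (α : ℕ → ℝ) (hα : α = eps i - eps j ∨ α = eps i + eps j) :
    {β ∈ Pos | -(rfl' n α β) ∈ Pos} = {γ ∈ Pos | α - γ ∈ Pos} ∪ {α} ∧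
    Set.ncard {β ∈ Pos | -(rfl' n α β) ∈ Pos} = Set.ncard {γ ∈ Pos | α - γ ∈ Pos} + 1 := by
  have hi' : i ≤ n := le_trans hij.le hj
  have hijne : i ≠ j := Nat.ne_of_lt hij
  obtain ⟨t, ht, hαt⟩ : ∃ t : ℝ, (t = 1 ∨ t = -1) ∧ α = eps i + t • eps j := by
    rcases hα with h | h
    · exact ⟨-1, Or.inr rfl, by rw [h]; module⟩
    · exact ⟨1, Or.inl rfl, by rw [h]; module⟩
  have hαmem : α ∈ Pos := by
    have hm : α ∈ {v : ℕ → ℝ | ∃ a b : ℕ, 1 ≤ a ∧ a < b ∧ b ≤ n ∧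
        (v = eps a - eps b ∨ v = eps a + eps b)} := ⟨i, j, hi, hij, hj, hα⟩
    rcases hPos with h | h <;> subst h
    · exact Or.inl hm
    · exact hm
  have hαi : α i = 1 := by
    rw [hαt]; simp [eps, Pi.add_apply, hijne]
  have hαj : α j = t := by
    rw [hαt]; simp [eps, Pi.add_apply, Ne.symm hijne]
  have hval : ∀ v : ℕ → ℝ, ip n v α = v i + t * v j := by
    intro v
    rw [hαt, ip_add_right, ip_smul_right, ip_eps_right hi', ip_eps_right hj]
  have hαα : ip n α α = 2 := by
    rw [hval, hαi, hαj]
    rcases ht with rfl | rfl <;> norm_num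
  have hrfl : ∀ β : ℕ → ℝ, rfl' n α β = β - (ip n β α) • α := by
    intro β
    have h2 : 2 * ip n β α / ip n α α = ip n β α := by rw [hαα]; ring
    simp only [rfl']
    rw [h2]
  have hzero : (0 : ℕ → ℝ) ∉ Pos := by
    intro h0
    have := pos_ip_rho hPos h0
    simp [ip] at this
  have heq : {β ∈ Pos | -(rfl' n α β) ∈ Pos} = {γ ∈ Pos | α - γ ∈ Pos} ∪ {α} := by
    ext β
    simp only [Set.mem_setOf_eq, Set.mem_union, Set.mem_singleton_iff]
    constructor
    · rintro ⟨hβ, hγ⟩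
      rw [hrfl, neg_sub] at hγ
      have hpos : 0 < ip n β α := by
        have p1 := pos_ip_rho hPos hβ
        have p2 := pos_ip_rho hPos hγ
        have p3 := pos_ip_rho hPos hαmem
        have hsum : ip n ((ip n β α) • α - β) (rho n)
            = ip n β α * ip n α (rho n) - ip n β (rho n) := by
          rw [ip_sub_left, ip_smul_left]
        nlinarith
      rcases trich hij hj ht hαt hPos hβ with h | h | ⟨h1, h2, _⟩
      · linarith
      · left
        rw [h, one_smul] at hγ
        exact ⟨hβ, hγ⟩
      · right
        rw [hαt]
        exact eq_alpha hij hj ht hPos hβ h1 h2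
    · rintro (⟨hβ, hS⟩ | rfl)
      · refine ⟨hβ, ?_⟩
        rw [hrfl, neg_sub]
        have hcβ : ip n β α ≤ 1 := by
          rcases trich hij hj ht hαt hPos hβ with h | h | ⟨h1, h2, _⟩
          · linarith
          · linarith
          · exfalso
            have hβα : β = α := by rw [hαt]; exact eq_alpha hij hj ht hPos hβ h1 h2
            rw [hβα, sub_self] at hS
            exact hzero hS
        have hcγ : ip n (α - β) α ≤ 1 := by
          rcases trich hij hj ht hαt hPos hS with h | h | ⟨h1, h2, _⟩
          · linarith
          · linarith
          · exfalso
            have hγα : α - β = α :=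
              (eq_alpha hij hj ht hPos hS h1 h2).trans hαt.symm
            have hβ0 : β = 0 := sub_eq_self.mp hγα
            rw [hβ0] at hβ
            exact hzero hβ
        have hsub : ip n (α - β) α = 2 - ip n β α := by rw [ip_sub_left, hαα]
        have h1 : ip n β α = 1 := by linarith
        rw [h1, one_smul]
        exact hS
      · refine ⟨hαmem, ?_⟩
        rw [hrfl, hαα]
        have h2 : ∀ v : ℕ → ℝ, -(v - (2 : ℝ) • v) = v := fun v => by module
        rw [h2]
        exact hαmem
  refine ⟨heq, ?_⟩
  have hαnot : α ∉ {γ ∈ Pos | α - γ ∈ Pos} := by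
    rintro ⟨-, h⟩
    rw [sub_self] at h
    exact hzero h
  rw [heq, Set.ncard_union_eq (Set.disjoint_singleton_right.mpr hαnot)
      ((finite_Pos hPos).subset (Set.sep_subset _ _)) (Set.finite_singleton α),
    Set.ncard_singleton]
end

section
/- Let D = {β_1, …, β_t, β} where β_j = ε_{2j−1} + ε_{2j} and β ∈ C_{2t+1} (the (2t+1)-th column of positive roots) in Φ ∈ {B_n, C_n, D_n}, an orthogonal subset. Then the sets Φ_{r_{β_1}}, …, Φ_{r_{β_t}}, Φ_{r_β} of positive roots sent negative by the individual reflections are pairwise disjoint, and Φ_σ for σ = r_{β_1}⋯r_{β_t} r_β equals their union; hence l(σ) = Σ_j l(r_{β_j}) + l(r_β). -/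
/-- The root `β_j = ε_{2j-1} + ε_{2j}`. -/
noncomputable def Bv (j : ℕ) : ℕ → ℝ := eps (2 * j - 1) + eps (2 * j)

/-- The set `Φ_w = {α ∈ Φ⁺ | w(α) ∈ -Φ⁺}` of positive roots sent negative by `w`. -/
def PhiSet (Pos : Set (ℕ → ℝ)) (w : Function.End (ℕ → ℝ)) : Set (ℕ → ℝ) :=
  {α ∈ Pos | -(w α) ∈ Pos}


namespace S8

variable {n : ℕ}
variable {n : ℕ}

lemma ip_eps_right (x : ℕ → ℝ) {i : ℕ} (hi : i ≤ n) : ip n x (eps i) = x i := by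
  unfold ip eps
  simp only [mul_ite, mul_one, mul_zero]
  rw [Finset.sum_ite_eq' (Finset.range (n+1)) i x]
  simp [Nat.lt_succ_iff, hi]

lemma ip_eps_left (y : ℕ → ℝ) {i : ℕ} (hi : i ≤ n) : ip n (eps i) y = y i := by
  have : ip n (eps i) y = ip n y (eps i) := by
    unfold ip; exact Finset.sum_congr rfl fun k _ => mul_comm _ _
  rw [this, ip_eps_right y hi]

lemma ip_add_left (x y a : ℕ → ℝ) : ip n (x + y) a = ip n x a + ip n y a := by
  unfold ip; rw [← Finset.sum_add_distrib]; exact Finset.sum_congr rfl fun k _ => by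
    simp [add_mul]

lemma ip_smul_left (c : ℝ) (x a : ℕ → ℝ) : ip n (c • x) a = c * ip n x a := by
  unfold ip; rw [Finset.mul_sum]; exact Finset.sum_congr rfl fun k _ => by
    simp [mul_assoc]

lemma ip_add_right (x a b : ℕ → ℝ) : ip n x (a + b) = ip n x a + ip n x b := by
  unfold ip; rw [← Finset.sum_add_distrib]; exact Finset.sum_congr rfl fun k _ => by
    simp [mul_add]

lemma ip_zero_of {x a : ℕ → ℝ} (h : ∀ k, x k * a k = 0) : ip n x a = 0 :=
  Finset.sum_eq_zero fun k _ => h k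

lemma rfl'_apply (a x : ℕ → ℝ) : rfl' n a x = x - (2 * ip n x a / ip n a a) • a := rfl

lemma rfl'_coord (a x : ℕ → ℝ) (m : ℕ) :
    rfl' n a x m = x m - (2 * ip n x a / ip n a a) * a m := rfl

lemma rfl'_fix {a x : ℕ → ℝ} (h : ip n x a = 0) : rfl' n a x = x := by
  simp [rfl'_apply, h]

lemma rfl'_add (a x y : ℕ → ℝ) : rfl' n a (x + y) = rfl' n a x + rfl' n a y := by
  simp only [rfl'_apply, ip_add_left]
  rw [show 2 * (ip n x a + ip n y a) / ip n a a
      = 2 * ip n x a / ip n a a + 2 * ip n y a / ip n a a by ring, add_smul]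
  abel

lemma rfl'_smul (a : ℕ → ℝ) (c : ℝ) (x : ℕ → ℝ) : rfl' n a (c • x) = c • rfl' n a x := by
  simp only [rfl'_apply, ip_smul_left]
  rw [show 2 * (c * ip n x a) / ip n a a = c * (2 * ip n x a / ip n a a) by ring, mul_smul,
    smul_sub]

lemma rfl'_neg (a x : ℕ → ℝ) : rfl' n a (-x) = -rfl' n a x := by
  have := rfl'_smul (n := n) a (-1) x
  simpa using this

lemma prod_cons_apply (a : Function.End (ℕ → ℝ)) (l : List (Function.End (ℕ → ℝ)))
    (x : ℕ → ℝ) : (a :: l).prod x = a (l.prod x) := rfl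

lemma prod_fix (l : List (ℕ → ℝ)) (x : ℕ → ℝ) (h : ∀ a ∈ l, ip n x a = 0) :
    (l.map (rfl' n)).prod x = x := by
  induction l with
  | nil => rfl
  | cons a l ih =>
    rw [List.map_cons, prod_cons_apply, ih (fun b hb => h b (List.mem_cons_of_mem a hb)),
      rfl'_fix (h a List.mem_cons_self)]

lemma prod_add (l : List (ℕ → ℝ)) (x y : ℕ → ℝ) :
    (l.map (rfl' n)).prod (x + y) = (l.map (rfl' n)).prod x + (l.map (rfl' n)).prod y := by
  induction l with
  | nil => rfl
  | cons a l ih => rw [List.map_cons, prod_cons_apply, ih, rfl'_add, prod_cons_apply,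
      prod_cons_apply]

lemma prod_smul (l : List (ℕ → ℝ)) (c : ℝ) (x : ℕ → ℝ) :
    (l.map (rfl' n)).prod (c • x) = c • (l.map (rfl' n)).prod x := by
  induction l with
  | nil => rfl
  | cons a l ih => rw [List.map_cons, prod_cons_apply, ih, rfl'_smul, prod_cons_apply]

lemma prod_neg (l : List (ℕ → ℝ)) (x : ℕ → ℝ) :
    (l.map (rfl' n)).prod (-x) = -(l.map (rfl' n)).prod x := by
  have := prod_smul (n := n) l (-1) x
  simpa using this

lemma Bv_coord (j m : ℕ) :
    Bv j m = (if m = 2*j-1 then (1:ℝ) else 0) + (if m = 2*j then 1 else 0) := rfl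

lemma ip_Bv_right (x : ℕ → ℝ) {j : ℕ} (h2 : 2*j ≤ n) :
    ip n x (Bv j) = x (2*j-1) + x (2*j) := by
  unfold Bv
  rw [ip_add_right, ip_eps_right x (by omega), ip_eps_right x h2]

lemma ip_Bv_Bv {j : ℕ} (hj : 1 ≤ j) (h2 : 2*j ≤ n) : ip n (Bv j) (Bv j) = 2 := by
  rw [ip_Bv_right _ h2, Bv_coord, Bv_coord]
  have h : 2*j-1 ≠ 2*j := by omega
  simp [h, h.symm]
  norm_num

lemma rfl'_Bv_applies {j : ℕ} (hj : 1 ≤ j) (h2 : 2*j ≤ n) :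
    rfl' n (Bv j) (eps (2*j-1)) = -eps (2*j) ∧ rfl' n (Bv j) (eps (2*j)) = -eps (2*j-1) := by
  have e1 : ip n (eps (2*j-1)) (Bv j) = 1 := by
    rw [ip_eps_left _ (show 2*j-1 ≤ n by omega), Bv_coord]
    have h : 2*j-1 ≠ 2*j := by omega
    simp [h]
  have e2 : ip n (eps (2*j)) (Bv j) = 1 := by
    rw [ip_eps_left _ h2, Bv_coord]
    have h : 2*j ≠ 2*j-1 := by omega
    simp [h]
  constructor <;>
  · rw [rfl'_apply, ip_Bv_Bv hj h2]
    first
      | rw [e1] | rw [e2]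
    norm_num
    unfold Bv
    module

lemma rfl'_Bv_fix {j m : ℕ} (hm : m ≤ n) (h1 : m ≠ 2*j-1) (h2 : m ≠ 2*j) :
    rfl' n (Bv j) (eps m) = eps m := by
  apply rfl'_fix
  rw [ip_eps_left _ hm, Bv_coord]
  simp [h1, h2]


/-- abbreviation for the product of the pair reflections -/
noncomputable def PA (n T : ℕ) : Function.End (ℕ → ℝ) :=
  (((List.range T).map (fun j => Bv (j + 1))).map (rfl' n)).prod

lemma PA_fix (T : ℕ) (x : ℕ → ℝ) (h : ∀ j, 1 ≤ j → j ≤ T → ip n x (Bv j) = 0) :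
    PA n T x = x := by
  apply prod_fix
  intro a ha
  simp only [List.mem_map, List.mem_range] at ha
  obtain ⟨j, hj, rfl⟩ := ha
  exact h (j+1) (by omega) (by omega)

lemma PA_succ (T : ℕ) (x : ℕ → ℝ) : PA n (T+1) x = PA n T (rfl' n (Bv (T+1)) x) := by
  unfold PA
  rw [List.range_succ, List.map_append, List.map_append, List.prod_append]
  simp only [List.map_cons, List.map_nil, List.prod_cons, List.prod_nil, mul_one]
  rfl

lemma PA_add (T : ℕ) (x y : ℕ → ℝ) : PA n T (x + y) = PA n T x + PA n T y := prod_add _ _ _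
lemma PA_smul (T : ℕ) (c : ℝ) (x : ℕ → ℝ) : PA n T (c • x) = c • PA n T x := prod_smul _ _ _
lemma PA_neg (T : ℕ) (x : ℕ → ℝ) : PA n T (-x) = -PA n T x := prod_neg _ _

lemma PA_eps {T j0 : ℕ} (h1 : 1 ≤ j0) (h2 : j0 ≤ T) (hT : 2*T ≤ n) :
    PA n T (eps (2*j0-1)) = -eps (2*j0) ∧ PA n T (eps (2*j0)) = -eps (2*j0-1) := by
  induction T with
  | zero => omega
  | succ T ih =>
    rw [PA_succ, PA_succ]
    by_cases hc : j0 = T + 1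
    · subst hc
      obtain ⟨e1, e2⟩ := rfl'_Bv_applies (n := n) h1 (by omega)
      rw [e1, e2, PA_neg, PA_neg]
      constructor
      · rw [PA_fix T (eps (2*(T+1))) ?_]
        intro j hj1 hj2
        rw [ip_eps_left _ (by omega), Bv_coord]
        have a1 : 2*(T+1) ≠ 2*j-1 := by omega
        have a2 : 2*(T+1) ≠ 2*j := by omega
        simp [a1, a2]
      · rw [PA_fix T (eps (2*(T+1)-1)) ?_]
        intro j hj1 hj2
        rw [ip_eps_left _ (by omega), Bv_coord]
        have a1 : 2*(T+1)-1 ≠ 2*j-1 := by omega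
        have a2 : 2*(T+1)-1 ≠ 2*j := by omega
        simp [a1, a2]
    · have h2' : j0 ≤ T := by omega
      rw [rfl'_Bv_fix (by omega) (by omega) (by omega),
        rfl'_Bv_fix (by omega) (by omega) (by omega)]
      exact ih h2' (by omega)

lemma PA_fix_high {T m : ℕ} (hm : m ≤ n) (hTm : 2*T < m) :
    PA n T (eps m) = eps m := by
  apply PA_fix
  intro j hj1 hj2
  rw [ip_eps_left _ hm, Bv_coord]
  have a1 : m ≠ 2*j-1 := by omega
  have a2 : m ≠ 2*j := by omega
  simp [a1, a2]

lemma sigma_apply (t : ℕ) (β x : ℕ → ℝ) :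
    ((((List.range t).map (fun j => Bv (j + 1)) ++ [β]).map (rfl' n)).prod) x
      = PA n t (rfl' n β x) := by
  rw [List.map_append, List.prod_append]
  simp only [List.map_cons, List.map_nil, List.prod_cons, List.prod_nil, mul_one]
  rfl


section Interface
variable {n : ℕ} {Pos : Set (ℕ → ℝ)}
  (hPos : Pos = PosB n ∨ Pos = PosC n ∨ Pos = PosD n)

include hPos

lemma pos_mem {v : ℕ → ℝ} (hv : v ∈ Pos) :
    (∃ i k : ℕ, ∃ e : ℝ, 1 ≤ i ∧ i < k ∧ k ≤ n ∧ (e = 1 ∨ e = -1) ∧ v = eps i + e • eps k) ∨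
    (∃ c : ℝ, ∃ i : ℕ, (c = 1 ∨ c = 2) ∧ 1 ≤ i ∧ i ≤ n ∧ v = c • eps i ∧
      ∀ m, 1 ≤ m → m ≤ n → c • eps m ∈ Pos) := by
  rcases hPos with rfl | rfl | rfl
  · rcases hv with ⟨i, k, h1, h2, h3, h4 | h4⟩ | ⟨i, h1, h2, h3⟩
    · exact Or.inl ⟨i, k, -1, h1, h2, h3, Or.inr rfl, by rw [h4]; module⟩
    · exact Or.inl ⟨i, k, 1, h1, h2, h3, Or.inl rfl, by rw [h4]; module⟩
    · exact Or.inr ⟨1, i, Or.inl rfl, h1, h2, by rw [h3]; module,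
        fun m hm1 hm2 => Or.inr ⟨m, hm1, hm2, by module⟩⟩
  · rcases hv with ⟨i, k, h1, h2, h3, h4 | h4⟩ | ⟨i, h1, h2, h3⟩
    · exact Or.inl ⟨i, k, -1, h1, h2, h3, Or.inr rfl, by rw [h4]; module⟩
    · exact Or.inl ⟨i, k, 1, h1, h2, h3, Or.inl rfl, by rw [h4]; module⟩
    · exact Or.inr ⟨2, i, Or.inr rfl, h1, h2, by rw [h3],
        fun m hm1 hm2 => Or.inr ⟨m, hm1, hm2, rfl⟩⟩
  · rcases hv with ⟨i, k, h1, h2, h3, h4 | h4⟩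
    · exact Or.inl ⟨i, k, -1, h1, h2, h3, Or.inr rfl, by rw [h4]; module⟩
    · exact Or.inl ⟨i, k, 1, h1, h2, h3, Or.inl rfl, by rw [h4]; module⟩

lemma pos_pair (i k : ℕ) (e : ℝ) (h1 : 1 ≤ i) (h2 : i < k) (h3 : k ≤ n)
    (he : e = 1 ∨ e = -1) : eps i + e • eps k ∈ Pos := by
  have hmm : ∀ m : ℕ, eps i + e • eps k = eps i - eps k ∨ eps i + e • eps k = eps i + eps k := by
    intro m
    rcases he with rfl | rfl
    · right; module
    · left; module
  rcases hPos with rfl | rfl | rfl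
  · exact Or.inl ⟨i, k, h1, h2, h3, hmm 0⟩
  · exact Or.inl ⟨i, k, h1, h2, h3, hmm 0⟩
  · exact ⟨i, k, h1, h2, h3, hmm 0⟩

lemma pos_first {v : ℕ → ℝ} (hv : v ∈ Pos) (i : ℕ) (hlow : ∀ k, k < i → v k = 0) :
    0 ≤ v i := by
  rcases pos_mem hPos hv with ⟨i0, k0, e, h1, h2, h3, he, rfl⟩ | ⟨c, i0, hc, h1, h2, rfl, _⟩
  · rcases he with rfl | rfl
    · simp only [Pi.add_apply, Pi.smul_apply, smul_eq_mul, eps]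
      split_ifs <;> norm_num
    · by_cases hib : i = k0
      · have hi0 : i0 < i := by omega
        have := hlow i0 hi0
        simp only [Pi.add_apply, Pi.smul_apply, smul_eq_mul, eps] at this
        have hik : i0 ≠ k0 := by omega
        simp [hik] at this
      · simp only [Pi.add_apply, Pi.smul_apply, smul_eq_mul, eps]
        split_ifs <;> norm_num
  · simp only [Pi.smul_apply, smul_eq_mul, eps]
    rcases hc with rfl | rfl <;> split_ifs <;> norm_num

lemma no_both {v : ℕ → ℝ} (h1 : v ∈ Pos) (h2 : -v ∈ Pos) : False := by
  rcases pos_mem hPos h1 with ⟨i0, k0, e, hh1, hh2, hh3, he, rfl⟩ | ⟨c, i0, hc, hh1, hh2, rfl, _⟩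
  · have hlow : ∀ k, k < i0 → (-(eps i0 + e • eps k0)) k = 0 := by
      intro k hk
      have a1 : k ≠ i0 := by omega
      have a2 : k ≠ k0 := by omega
      simp [eps, a1, a2]
    have h := pos_first hPos h2 i0 hlow
    have a2 : i0 ≠ k0 := by omega
    simp [eps, a2] at h
    linarith
  · have hlow : ∀ k, k < i0 → (-(c • eps i0)) k = 0 := by
      intro k hk
      have a1 : k ≠ i0 := by omega
      simp [eps, a1]
    have h := pos_first hPos h2 i0 hlow
    simp [eps] at h
    rcases hc with rfl | rfl <;> linarith

lemma phi_low {γ α : ℕ → ℝ} {s : ℕ} (hγ : ∀ m, m < s → γ m = 0)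
    (hα : α ∈ Pos) (hrα : -(rfl' n γ α) ∈ Pos) : ∀ m, m < s → α m = 0 := by
  intro m hm
  induction m using Nat.strong_induction_on with
  | _ m IH =>
    have h1 : ∀ k, k < m → α k = 0 := fun k hk => IH k hk (hk.trans hm)
    have h2 : 0 ≤ α m := pos_first hPos hα m h1
    have h3 : ∀ k, k < m → (-(rfl' n γ α)) k = 0 := by
      intro k hk
      simp [rfl'_apply, h1 k hk, hγ k (hk.trans hm)]
    have h4 := pos_first hPos hrα m h3
    have h5 : (-(rfl' n γ α)) m = -α m := by
      simp [rfl'_apply, hγ m hm]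
    rw [h5] at h4
    linarith

end Interface


section Beta
variable {n t : ℕ} {Pos : Set (ℕ → ℝ)} {β : ℕ → ℝ}

lemma beta_low (hcol : sInf {k | β k ≠ 0} = 2*t+1) : ∀ m, m < 2*t+1 → β m = 0 := by
  intro m hm
  by_contra h
  exact Nat.notMem_of_lt_sInf (hcol ▸ hm : m < sInf {k | β k ≠ 0}) h

lemma beta_shape (hPos : Pos = PosB n ∨ Pos = PosC n ∨ Pos = PosD n)
    (hβ : β ∈ Pos) (hcol : sInf {k | β k ≠ 0} = 2*t+1) :
    (∃ q : ℕ, ∃ e : ℝ, 2*t+1 < q ∧ q ≤ n ∧ (e = 1 ∨ e = -1) ∧ β = eps (2*t+1) + e • eps q) ∨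
    (∃ c : ℝ, (c = 1 ∨ c = 2) ∧ β = c • eps (2*t+1)) := by
  rcases pos_mem hPos hβ with ⟨i, k, e, h1, h2, h3, he, rfl⟩ | ⟨c, i, hc, h1, h2, rfl, _⟩
  · set v := eps i + e • eps k with hv
    have hik : i ≠ k := by omega
    have hiS : i ∈ {m | v m ≠ 0} := by
      simp [hv, eps, hik]
    have hle : 2*t+1 ≤ i := hcol ▸ Nat.sInf_le hiS
    have hmem := Nat.sInf_mem (s := {m | v m ≠ 0}) ⟨i, hiS⟩
    rw [hcol] at hmem
    have hieq : i = 2*t+1 := by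
      by_contra hne
      have a1 : 2*t+1 ≠ i := fun h => hne h.symm
      have a2 : 2*t+1 ≠ k := by omega
      apply hmem
      simp [hv, eps, a1, a2]
    subst hieq
    exact Or.inl ⟨k, e, h2, h3, he, rfl⟩
  · set v := c • eps i with hv
    have hc0 : c ≠ 0 := by rcases hc with rfl | rfl <;> norm_num
    have hiS : i ∈ {m | v m ≠ 0} := by simp [hv, eps, hc0]
    have hle : 2*t+1 ≤ i := hcol ▸ Nat.sInf_le hiS
    have hmem := Nat.sInf_mem (s := {m | v m ≠ 0}) ⟨i, hiS⟩
    rw [hcol] at hmem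
    have hieq : i = 2*t+1 := by
      by_contra hne
      have a1 : 2*t+1 ≠ i := fun h => hne h.symm
      apply hmem
      simp [hv, eps, a1]
    subst hieq
    exact Or.inr ⟨c, hc, rfl⟩

lemma rfl_beta_eps (hPos : Pos = PosB n ∨ Pos = PosC n ∨ Pos = PosD n)
    (hβ : β ∈ Pos) (hcol : sInf {k | β k ≠ 0} = 2*t+1) (hn : 2*t+1 ≤ n) :
    ∀ k, 2*t+1 ≤ k → k ≤ n → ∃ m : ℕ, ∃ s : ℝ, 2*t+1 ≤ m ∧ m ≤ n ∧ (s = 1 ∨ s = -1) ∧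
      rfl' n β (eps k) = s • eps m := by
  intro k hk1 hk2
  rcases beta_shape hPos hβ hcol with ⟨q, e, hq1, hq2, he, rfl⟩ | ⟨c, hc, rfl⟩
  · set p := 2*t+1 with hp
    have hpq : p ≠ q := by omega
    have hββ : ip n (eps p + e • eps q) (eps p + e • eps q) = 2 := by
      rw [ip_add_left, ip_smul_left, ip_eps_left _ (by omega), ip_eps_left _ hq2]
      rcases he with rfl | rfl <;> simp [eps, hpq, hpq.symm] <;> norm_num
    rcases eq_or_ne k p with rfl | hkp
    · have hip : ip n (eps p) (eps p + e • eps q) = 1 := by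
        rw [ip_eps_left _ hk2]
        simp [eps, hpq]
      refine ⟨q, -e, by omega, hq2, ?_, ?_⟩
      · rcases he with rfl | rfl
        · right; norm_num
        · left; norm_num
      · rw [rfl'_apply, hip, hββ]
        norm_num
    rcases eq_or_ne k q with hkq | hkq
    · subst hkq
      have hip : ip n (eps k) (eps p + e • eps k) = e := by
        rw [ip_eps_left _ hk2]
        simp [eps, hpq.symm]
      refine ⟨p, -e, by omega, by omega, ?_, ?_⟩
      · rcases he with rfl | rfl
        · right; norm_num
        · left; norm_num
      · rw [rfl'_apply, hip, hββ]
        rcases he with rfl | rfl <;> norm_num <;> module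
    · refine ⟨k, 1, hk1, hk2, Or.inl rfl, ?_⟩
      rw [one_smul]
      apply rfl'_fix
      rw [ip_eps_left _ hk2]
      simp [eps, hkp, hkq]
  · set p := 2*t+1 with hp
    have hc0 : c ≠ 0 := by rcases hc with rfl | rfl <;> norm_num
    have hββ : ip n (c • eps p) (c • eps p) = c * c := by
      rw [ip_smul_left, ip_eps_left _ (by omega)]
      simp [eps]
    rcases eq_or_ne k p with rfl | hkp
    · have hip : ip n (eps p) (c • eps p) = c := by
        rw [ip_eps_left _ hk2]
        simp [eps]
      refine ⟨p, -1, hk1, hk2, Or.inr rfl, ?_⟩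
      rw [rfl'_apply, hip, hββ]
      have : 2 * c / (c * c) = 2 / c := by field_simp
      rw [this]
      have : (2 / c) • (c • eps p) = (2:ℝ) • eps p := by
        rw [smul_smul]
        congr 1
        field_simp
      rw [this]
      module
    · refine ⟨k, 1, hk1, hk2, Or.inl rfl, ?_⟩
      rw [one_smul]
      apply rfl'_fix
      rw [ip_eps_left _ hk2]
      simp [eps, hkp]

end Beta

section Main
variable {n t : ℕ} {Pos : Set (ℕ → ℝ)} {β : ℕ → ℝ}
  (hPos : Pos = PosB n ∨ Pos = PosC n ∨ Pos = PosD n)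
  (hn : 2 * t + 1 ≤ n) (hβ : β ∈ Pos) (hcol : sInf {k | β k ≠ 0} = 2 * t + 1)

include hPos hn hβ hcol

/-- the high-column case: `α` supported above `2t`. -/
lemma high_case {α : ℕ → ℝ} (hα : α ∈ Pos) (hαlow : ∀ m, m ≤ 2*t → α m = 0) :
    (-(PA n t (rfl' n β α)) ∈ Pos ↔
      (∃ j, 1 ≤ j ∧ j ≤ t ∧ -(rfl' n (Bv j) α) ∈ Pos) ∨ -(rfl' n β α) ∈ Pos) := by
  have hβlow := beta_low hcol
  have hPAfix : PA n t (rfl' n β α) = rfl' n β α := by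
    apply PA_fix
    intro j hj1 hjt
    rw [ip_Bv_right _ (by omega)]
    rw [rfl'_coord, rfl'_coord, hαlow (2*j-1) (by omega), hαlow (2*j) (by omega),
      hβlow (2*j-1) (by omega), hβlow (2*j) (by omega)]
    ring
  rw [hPAfix]
  constructor
  · exact fun h => Or.inr h
  · rintro (⟨j, hj1, hjt, hjP⟩ | hβP)
    · exfalso
      have hfix : rfl' n (Bv j) α = α := by
        apply rfl'_fix
        rw [ip_Bv_right _ (by omega), hαlow (2*j-1) (by omega), hαlow (2*j) (by omega)]
        ring
      rw [hfix] at hjP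
      exact no_both hPos hα hjP
    · exact hβP

lemma main_iff : ∀ α ∈ Pos,
    (-(PA n t (rfl' n β α)) ∈ Pos ↔
      (∃ j, 1 ≤ j ∧ j ≤ t ∧ -(rfl' n (Bv j) α) ∈ Pos) ∨ -(rfl' n β α) ∈ Pos) := by
  have hβlow := beta_low hcol
  intro α hα
  rcases pos_mem hPos hα with ⟨i, k, e, h1, h2, h3, he, rfl⟩ | ⟨c, i, hc, h1, h2, rfl, hcl⟩
  · -- α = eps i + e • eps k
    by_cases hi : i ≤ 2*t
    case neg =>
      exact high_case hPos hn hβ hcol hα (fun m hm => by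
        have a1 : m ≠ i := by omega
        have a2 : m ≠ k := by omega
        simp [eps, a1, a2])
    obtain ⟨j0, hj01, hj0t, hij0⟩ : ∃ j0, 1 ≤ j0 ∧ j0 ≤ t ∧ (i = 2*j0-1 ∨ i = 2*j0) :=
      ⟨(i+1)/2, by omega, by omega, by omega⟩
    obtain ⟨i', hi'⟩ : ∃ i', (i = 2*j0-1 ∧ i' = 2*j0) ∨ (i = 2*j0 ∧ i' = 2*j0-1) := by
      rcases hij0 with h | h
      exacts [⟨2*j0, Or.inl ⟨h, rfl⟩⟩, ⟨2*j0-1, Or.inr ⟨h, rfl⟩⟩]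
    have hi'1 : 1 ≤ i' := by omega
    have hi'2 : i' ≤ 2*j0 := by omega
    have hPAi : PA n t (eps i) = -eps i' := by
      obtain ⟨e1, e2⟩ := PA_eps (n := n) hj01 hj0t (by omega)
      rcases hi' with ⟨hh1, hh2⟩ | ⟨hh1, hh2⟩ <;> rw [hh1, hh2]
      exacts [e1, e2]
    by_cases hkp : k = 2*j0
    · -- same pair : i = 2*j0-1, k = 2*j0, i' = k
      have hieq : i = 2*j0-1 := by omega
      have hi'k : i' = k := by omega
      have hipβ : ip n (eps i + e • eps k) β = 0 := by
        rw [ip_add_left, ip_smul_left, ip_eps_left _ (by omega), ip_eps_left _ h3,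
          hβlow i (by omega), hβlow k (by omega)]
        ring
      have hrβ : rfl' n β (eps i + e • eps k) = eps i + e • eps k := rfl'_fix hipβ
      have hbv : Bv j0 = eps i + eps k := by
        unfold Bv; rw [hieq, hkp]
      have hik : i ≠ k := by omega
      have hcoord : (eps i + e • eps k) (2*j0-1) + (eps i + e • eps k) (2*j0) = 1 + e := by
        have a1 : (2*j0-1 : ℕ) ≠ k := by omega
        have a2 : (2*j0 : ℕ) ≠ i := by omega
        rw [← hieq, ← hkp]
        simp [eps, hik, a1, a2, Ne.symm hik]
        try ring
      rcases he with rfl | rfl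
      · -- e = 1 : both sides true
        have hL : -(PA n t (rfl' n β (eps i + (1:ℝ) • eps k))) ∈ Pos := by
          rw [hrβ, PA_add, PA_smul, hPAi, hi'k]
          have hPAk : PA n t (eps k) = -eps i := by
            obtain ⟨e1, e2⟩ := PA_eps (n := n) hj01 hj0t (by omega)
            rw [← hieq, ← hkp] at e2
            exact e2
          rw [hPAk]
          have : -(-eps k + (1:ℝ) • -eps i) = eps i + (1:ℝ) • eps k := by module
          rw [this]
          exact hα
        have hR : -(rfl' n (Bv j0) (eps i + (1:ℝ) • eps k)) ∈ Pos := by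
          have hip : ip n (eps i + (1:ℝ) • eps k) (Bv j0) = 2 := by
            rw [ip_Bv_right _ (by omega), hcoord]; norm_num
          rw [rfl'_apply, hip, ip_Bv_Bv hj01 (by omega), hbv]
          have : -(eps i + (1:ℝ) • eps k - (2 * 2 / 2 : ℝ) • (eps i + eps k))
              = eps i + (1:ℝ) • eps k := by module
          rw [this]
          exact hα
        exact iff_of_true hL (Or.inl ⟨j0, hj01, hj0t, hR⟩)
      · -- e = -1 : both sides false
        have hPAα : PA n t (rfl' n β (eps i + (-1:ℝ) • eps k)) = eps i + (-1:ℝ) • eps k := by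
          rw [hrβ, PA_add, PA_smul, hPAi, hi'k]
          have hPAk : PA n t (eps k) = -eps i := by
            obtain ⟨e1, e2⟩ := PA_eps (n := n) hj01 hj0t (by omega)
            rw [← hieq, ← hkp] at e2
            exact e2
          rw [hPAk]
          module
        constructor
        · intro hL
          exfalso
          rw [hPAα] at hL
          exact no_both hPos hα hL
        · rintro (⟨j, hj1, hjt, hjP⟩ | hβP)
          · exfalso
            have hfix : rfl' n (Bv j) (eps i + (-1:ℝ) • eps k) = eps i + (-1:ℝ) • eps k := by
              apply rfl'_fix
              rw [ip_Bv_right _ (by omega)]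
              have hv : ∀ m : ℕ, (eps i + (-1:ℝ) • eps k) m
                  = (if m = i then (1:ℝ) else 0) - (if m = k then 1 else 0) := by
                intro m; simp [eps]; ring
              rw [hv, hv, hieq, hkp]
              split_ifs <;> first | (exfalso; omega) | norm_num
            rw [hfix] at hjP
            exact no_both hPos hα hjP
          · exfalso
            rw [hrβ] at hβP
            exact no_both hPos hα hβP
    · -- k not in pair j0 (k > 2*j0 or k ≤ 2t in another pair or k > 2t)
      have hknp1 : k ≠ 2*j0-1 := by omega
      have hk2j0 : 2*j0 < k := by omega
      -- RHS is true via j0, uniformly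
      have hR : -(rfl' n (Bv j0) (eps i + e • eps k)) ∈ Pos := by
        have hip : ip n (eps i + e • eps k) (Bv j0) = 1 := by
          rw [ip_Bv_right _ (by omega)]
          have a1 : (2*j0-1 : ℕ) ≠ k := by omega
          have a2 : (2*j0 : ℕ) ≠ k := by omega
          rcases hi' with ⟨hh1, hh2⟩ | ⟨hh1, hh2⟩ <;> rw [← hh1] <;>
            simp [eps, a1, a2, show (2*j0-1:ℕ) ≠ 2*j0 by omega, show (2*j0:ℕ) ≠ 2*j0-1 by omega,
              hh1] <;> ring_nf <;>
            simp [show ¬ (2*j0-1 = k) from a1, show ¬ (2*j0 = k) from a2]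
        rw [rfl'_apply, hip, ip_Bv_Bv hj01 (by omega)]
        have hsc : (2 * 1 / 2 : ℝ) = 1 := by norm_num
        rw [hsc, one_smul]
        have hbv : Bv j0 = eps i + eps i' := by
          unfold Bv
          rcases hi' with ⟨hh1, hh2⟩ | ⟨hh1, hh2⟩
          · rw [← hh1, ← hh2]
          · rw [← hh2, ← hh1]
            module
        rw [hbv]
        have : -(eps i + e • eps k - (eps i + eps i')) = eps i' + (-e) • eps k := by module
        rw [this]
        refine pos_pair hPos i' k (-e) hi'1 (by omega) h3 ?_
        rcases he with rfl | rfl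
        · right; norm_num
        · left; norm_num
      -- LHS is true
      have hL : -(PA n t (rfl' n β (eps i + e • eps k))) ∈ Pos := by
        by_cases hk : k ≤ 2*t
        · -- k in another pair j1 > j0
          obtain ⟨j1, hj11, hj1t, hkj1⟩ : ∃ j1, 1 ≤ j1 ∧ j1 ≤ t ∧ (k = 2*j1-1 ∨ k = 2*j1) :=
            ⟨(k+1)/2, by omega, by omega, by omega⟩
          obtain ⟨k', hk'⟩ : ∃ k', (k = 2*j1-1 ∧ k' = 2*j1) ∨ (k = 2*j1 ∧ k' = 2*j1-1) := by
            rcases hkj1 with h | h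
            exacts [⟨2*j1, Or.inl ⟨h, rfl⟩⟩, ⟨2*j1-1, Or.inr ⟨h, rfl⟩⟩]
          have hj0j1 : j0 < j1 := by omega
          have hPAk : PA n t (eps k) = -eps k' := by
            obtain ⟨e1, e2⟩ := PA_eps (n := n) hj11 hj1t (by omega)
            rcases hk' with ⟨hh1, hh2⟩ | ⟨hh1, hh2⟩ <;> rw [hh1, hh2]
            exacts [e1, e2]
          have hipβ : ip n (eps i + e • eps k) β = 0 := by
            rw [ip_add_left, ip_smul_left, ip_eps_left _ (by omega), ip_eps_left _ h3,
              hβlow i (by omega), hβlow k (by omega)]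
            ring
          rw [rfl'_fix hipβ, PA_add, PA_smul, hPAi, hPAk]
          have : -(-eps i' + e • -eps k') = eps i' + e • eps k' := by module
          rw [this]
          exact pos_pair hPos i' k' e hi'1 (by omega) (by omega) he
        · -- k ≥ 2t+1
          obtain ⟨m, s, hm1, hm2, hs, hrk⟩ := rfl_beta_eps hPos hβ hcol hn k (by omega) h3
          have hfixi : rfl' n β (eps i) = eps i := by
            apply rfl'_fix
            rw [ip_eps_left _ (by omega), hβlow i (by omega)]
          rw [rfl'_add, rfl'_smul, hfixi, hrk, PA_add, PA_smul, PA_smul, hPAi,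
            PA_fix_high hm2 (by omega)]
          have : -(-eps i' + e • s • eps m) = eps i' + (-(e*s)) • eps m := by module
          rw [this]
          refine pos_pair hPos i' m (-(e*s)) hi'1 (by omega) hm2 ?_
          rcases he with rfl | rfl <;> rcases hs with rfl | rfl <;> norm_num
      exact iff_of_true hL (Or.inl ⟨j0, hj01, hj0t, hR⟩)
  · -- α = c • eps i
    by_cases hi : i ≤ 2*t
    case neg =>
      exact high_case hPos hn hβ hcol hα (fun m hm => by
        have a1 : m ≠ i := by omega
        simp [eps, a1])
    obtain ⟨j0, hj01, hj0t, hij0⟩ : ∃ j0, 1 ≤ j0 ∧ j0 ≤ t ∧ (i = 2*j0-1 ∨ i = 2*j0) :=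
      ⟨(i+1)/2, by omega, by omega, by omega⟩
    obtain ⟨i', hi'⟩ : ∃ i', (i = 2*j0-1 ∧ i' = 2*j0) ∨ (i = 2*j0 ∧ i' = 2*j0-1) := by
      rcases hij0 with h | h
      exacts [⟨2*j0, Or.inl ⟨h, rfl⟩⟩, ⟨2*j0-1, Or.inr ⟨h, rfl⟩⟩]
    have hi'1 : 1 ≤ i' := by omega
    have hPAi : PA n t (eps i) = -eps i' := by
      obtain ⟨e1, e2⟩ := PA_eps (n := n) hj01 hj0t (by omega)
      rcases hi' with ⟨hh1, hh2⟩ | ⟨hh1, hh2⟩ <;> rw [hh1, hh2]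
      exacts [e1, e2]
    have hL : -(PA n t (rfl' n β (c • eps i))) ∈ Pos := by
      have hipβ : ip n (c • eps i) β = 0 := by
        rw [ip_smul_left, ip_eps_left _ (by omega), hβlow i (by omega)]
        ring
      rw [rfl'_fix hipβ, PA_smul, hPAi]
      have : -(c • -eps i') = c • eps i' := by module
      rw [this]
      exact hcl i' hi'1 (by omega)
    have hR : -(rfl' n (Bv j0) (c • eps i)) ∈ Pos := by
      have hip : ip n (c • eps i) (Bv j0) = c := by
        rw [ip_Bv_right _ (by omega)]
        rcases hi' with ⟨hh1, hh2⟩ | ⟨hh1, hh2⟩ <;> rw [← hh1] <;>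
          simp [eps, show (2*j0-1:ℕ) ≠ 2*j0 by omega, show (2*j0:ℕ) ≠ 2*j0-1 by omega, hh1]
      rw [rfl'_apply, hip, ip_Bv_Bv hj01 (by omega)]
      have hsc : 2 * c / 2 = c := by ring
      rw [hsc]
      have hbv : Bv j0 = eps i + eps i' := by
        unfold Bv
        rcases hi' with ⟨hh1, hh2⟩ | ⟨hh1, hh2⟩
        · rw [← hh1, ← hh2]
        · rw [← hh2, ← hh1]
          module
      rw [hbv]
      have : -(c • eps i - c • (eps i + eps i')) = c • eps i' := by module
      rw [this]
      exact hcl i' hi'1 (by omega)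
    exact iff_of_true hL (Or.inl ⟨j0, hj01, hj0t, hR⟩)

end Main

lemma pos_finite {n : ℕ} {Pos : Set (ℕ → ℝ)}
    (hPos : Pos = PosB n ∨ Pos = PosC n ∨ Pos = PosD n) : Pos.Finite := by
  have hsub : Pos ⊆ (fun p : ℕ × ℕ × ℝ => eps p.1 + p.2.2 • eps p.2.1) ''
      (Set.Iic n ×ˢ (Set.Iic n ×ˢ ({-1, 0, 1} : Set ℝ))) := by
    intro v hv
    rcases pos_mem hPos hv with ⟨i, k, e, h1, h2, h3, he, rfl⟩ | ⟨c, i, hc, h1, h2, rfl, _⟩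
    · refine ⟨(i, k, e), ⟨by simpa using by omega, by simpa using h3, ?_⟩, rfl⟩
      rcases he with rfl | rfl <;> simp
    · refine ⟨(i, i, c - 1), ⟨by simpa using h2, by simpa using h2, ?_⟩, ?_⟩
      · rcases hc with rfl | rfl <;> norm_num
      · simp only
        module
  exact Set.Finite.subset (Set.Finite.image _ ((Set.finite_Iic n).prod
    ((Set.finite_Iic n).prod ((Set.finite_singleton (1:ℝ)).insert 0 |>.insert (-1))))) hsub

lemma ncard_biUnion (F : ℕ → Set (ℕ → ℝ)) (s : Finset ℕ) (hfin : ∀ j, (F j).Finite)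
    (hd : ∀ i ∈ s, ∀ j ∈ s, i ≠ j → Disjoint (F i) (F j)) :
    (⋃ j ∈ s, F j).ncard = ∑ j ∈ s, (F j).ncard := by
  induction s using Finset.induction_on with
  | empty => simp
  | @insert a s ha ih =>
    have hdis : Disjoint (F a) (⋃ j ∈ s, F j) := by
      rw [Set.disjoint_left]
      rintro α hαa hαU
      simp only [Set.mem_iUnion] at hαU
      obtain ⟨j, hj, hαj⟩ := hαU
      have hne : a ≠ j := fun h => ha (h ▸ hj)
      exact Set.disjoint_left.mp
        (hd a (Finset.mem_insert_self a s) j (Finset.mem_insert_of_mem hj) hne) hαa hαj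
    have hU : (⋃ j ∈ s, F j).Finite := Set.Finite.biUnion s.finite_toSet fun j _ => hfin j
    rw [Finset.sum_insert ha, Finset.set_biUnion_insert, Set.ncard_union_eq hdis (hfin a) hU,
      ih fun i hi j hj hij => hd i (Finset.mem_insert_of_mem hi) j (Finset.mem_insert_of_mem hj) hij]


end S8

open S8 in
/-- For `D = {β_1, …, β_t, β}` with `β_j = ε_{2j-1} + ε_{2j}` and `β` a positive root in column
`2t + 1`, the sets `Φ_{r_{β_j}}`, `Φ_{r_β}` are pairwise disjoint, `Φ_σ` is their union for
`σ = r_{β_1} ⋯ r_{β_t} r_β`, and hence `l(σ) = Σ_j l(r_{β_j}) + l(r_β)`. -/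
theorem stmt8 (n t : ℕ) (Pos : Set (ℕ → ℝ))
    (hPos : Pos = PosB n ∨ Pos = PosC n ∨ Pos = PosD n)
    (hn : 2 * t + 1 ≤ n) (β : ℕ → ℝ) (hβ : β ∈ Pos)
    (hcol : sInf {k | β k ≠ 0} = 2 * t + 1) :
    (∀ j1 ∈ Finset.Icc 1 t, ∀ j2 ∈ Finset.Icc 1 t, j1 ≠ j2 →
        Disjoint (PhiSet Pos (rfl' n (Bv j1))) (PhiSet Pos (rfl' n (Bv j2)))) ∧
    (∀ j ∈ Finset.Icc 1 t, Disjoint (PhiSet Pos (rfl' n (Bv j))) (PhiSet Pos (rfl' n β))) ∧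
    PhiSet Pos ((((List.range t).map (fun j => Bv (j + 1)) ++ [β]).map (rfl' n)).prod)
      = (⋃ j ∈ Finset.Icc 1 t, PhiSet Pos (rfl' n (Bv j))) ∪ PhiSet Pos (rfl' n β) ∧
    Set.ncard (PhiSet Pos ((((List.range t).map (fun j => Bv (j + 1)) ++ [β]).map (rfl' n)).prod))
      = (∑ j ∈ Finset.Icc 1 t, Set.ncard (PhiSet Pos (rfl' n (Bv j))))
        + Set.ncard (PhiSet Pos (rfl' n β)) := by
  have hBvlow : ∀ j : ℕ, 1 ≤ j → ∀ m, m < 2*j-1 → Bv j m = 0 := by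
    intro j hj m hm
    rw [Bv_coord]
    have a1 : m ≠ 2*j-1 := by omega
    have a2 : m ≠ 2*j := by omega
    simp [a1, a2]
  have hdisj : ∀ j1 j2 : ℕ, 1 ≤ j1 → j1 ≤ t → 1 ≤ j2 → j2 ≤ t → j1 < j2 →
      Disjoint (PhiSet Pos (rfl' n (Bv j1))) (PhiSet Pos (rfl' n (Bv j2)))  := by
    intro j1 j2 ha1 ha2 hb1 hb2 hlt
    rw [Set.disjoint_left]
    rintro α ⟨hα, hα1⟩ ⟨_, hα2⟩
    have hlow := phi_low hPos (hBvlow j2 hb1) hα hα2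
    have hfix : rfl' n (Bv j1) α = α := by
      apply rfl'_fix
      rw [ip_Bv_right _ (show 2*j1 ≤ n by omega), hlow (2*j1-1) (by omega),
        hlow (2*j1) (by omega)]
      ring
    rw [hfix] at hα1
    exact no_both hPos hα hα1
  have part1 : ∀ j1 ∈ Finset.Icc 1 t, ∀ j2 ∈ Finset.Icc 1 t, j1 ≠ j2 →
      Disjoint (PhiSet Pos (rfl' n (Bv j1))) (PhiSet Pos (rfl' n (Bv j2))) := by
    intro j1 hj1 j2 hj2 hne
    rw [Finset.mem_Icc] at hj1 hj2
    rcases hne.lt_or_gt with h | h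
    · exact hdisj j1 j2 hj1.1 hj1.2 hj2.1 hj2.2 h
    · exact (hdisj j2 j1 hj2.1 hj2.2 hj1.1 hj1.2 h).symm
  have part2 : ∀ j ∈ Finset.Icc 1 t,
      Disjoint (PhiSet Pos (rfl' n (Bv j))) (PhiSet Pos (rfl' n β)) := by
    intro j hj
    rw [Finset.mem_Icc] at hj
    rw [Set.disjoint_left]
    rintro α ⟨hα, hα1⟩ ⟨_, hα2⟩
    have hlow := phi_low hPos (beta_low hcol) hα hα2
    have hfix : rfl' n (Bv j) α = α := by
      apply rfl'_fix
      rw [ip_Bv_right _ (show 2*j ≤ n by omega), hlow (2*j-1) (by omega),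
        hlow (2*j) (by omega)]
      ring
    rw [hfix] at hα1
    exact no_both hPos hα hα1
  have part3 : PhiSet Pos ((((List.range t).map (fun j => Bv (j + 1)) ++ [β]).map (rfl' n)).prod)
      = (⋃ j ∈ Finset.Icc 1 t, PhiSet Pos (rfl' n (Bv j))) ∪ PhiSet Pos (rfl' n β) := by
    ext α
    simp only [PhiSet, Set.mem_setOf_eq, Set.mem_union, Set.mem_iUnion, Finset.mem_Icc]
    constructor
    · rintro ⟨h0, hL⟩
      rw [sigma_apply] at hL
      rcases (main_iff hPos hn hβ hcol α h0).mp hL with ⟨j, hj1, hjt, hP⟩ | hP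
      · exact Or.inl ⟨j, ⟨hj1, hjt⟩, h0, hP⟩
      · exact Or.inr ⟨h0, hP⟩
    · rintro (⟨j, ⟨hj1, hjt⟩, h0, hP⟩ | ⟨h0, hP⟩)
      · refine ⟨h0, ?_⟩
        rw [sigma_apply]
        exact (main_iff hPos hn hβ hcol α h0).mpr (Or.inl ⟨j, hj1, hjt, hP⟩)
      · refine ⟨h0, ?_⟩
        rw [sigma_apply]
        exact (main_iff hPos hn hβ hcol α h0).mpr (Or.inr hP)
  have hfinΦ : ∀ w, (PhiSet Pos w).Finite :=
    fun w => (pos_finite hPos).subset fun α h => h.1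
  have part4 : Set.ncard (PhiSet Pos
        ((((List.range t).map (fun j => Bv (j + 1)) ++ [β]).map (rfl' n)).prod))
      = (∑ j ∈ Finset.Icc 1 t, Set.ncard (PhiSet Pos (rfl' n (Bv j))))
        + Set.ncard (PhiSet Pos (rfl' n β)) := by
    have hdisU : Disjoint (⋃ j ∈ Finset.Icc 1 t, PhiSet Pos (rfl' n (Bv j)))
        (PhiSet Pos (rfl' n β)) := by
      rw [Set.disjoint_left]
      rintro α hαU hαβ
      simp only [Set.mem_iUnion] at hαU
      obtain ⟨j, hj, hαj⟩ := hαU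
      exact Set.disjoint_left.mp (part2 j hj) hαj hαβ
    have hU : (⋃ j ∈ Finset.Icc 1 t, PhiSet Pos (rfl' n (Bv j))).Finite :=
      Set.Finite.biUnion (Finset.Icc 1 t).finite_toSet fun j _ => hfinΦ _
    rw [part3, Set.ncard_union_eq hdisU hU (hfinΦ _),
      ncard_biUnion _ _ (fun j => hfinΦ _) part1]
  exact ⟨part1, part2, part3, part4⟩
end

section
/- In D_n, for β = ε_i + ε_j with i < j, the number of unordered pairs of positive roots summing to β equals 2n − i − j − 1. -/
lemma eps_msum_apply (s : Multiset ℕ) (k : ℕ) : (s.map eps).sum k = (s.count k : ℝ) := by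
  induction s using Multiset.induction_on with
  | empty => simp
  | cons a s ih =>
    rw [Multiset.map_cons, Multiset.sum_cons, Multiset.count_cons]
    push_cast
    rw [Pi.add_apply, ih]
    show (if k = a then (1:ℝ) else 0) + _ = _
    by_cases h : k = a <;> simp [h] <;> ring

lemma eps_msum_inj {s t : Multiset ℕ} (h : (s.map eps).sum = (t.map eps).sum) : s = t := by
  ext k
  have h2 := congrFun h k
  rw [eps_msum_apply, eps_msum_apply] at h2
  exact_mod_cast h2

lemma pair_eq {c d x y : ℕ} (h : ({c, d} : Multiset ℕ) = {x, y}) :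
    (c = x ∧ d = y) ∨ (c = y ∧ d = x) := by
  have hc : c ∈ ({x, y} : Multiset ℕ) := h ▸ (by simp)
  simp only [Multiset.insert_eq_cons, Multiset.mem_cons, Multiset.mem_singleton] at hc
  rcases hc with rfl | rfl
  · left
    refine ⟨rfl, ?_⟩
    rw [Multiset.insert_eq_cons, Multiset.insert_eq_cons, Multiset.cons_inj_right] at h
    simpa using h
  · right
    refine ⟨rfl, ?_⟩
    rw [Multiset.pair_comm x c, Multiset.insert_eq_cons, Multiset.insert_eq_cons,
      Multiset.cons_inj_right] at h
    simpa using h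

lemma triple_eq {a c d b i j : ℕ} (h : ({a, c, d} : Multiset ℕ) = {b, i, j}) :
    (a = b ∧ ({c, d} : Multiset ℕ) = {i, j}) ∨ (a = i ∧ ({c, d} : Multiset ℕ) = {b, j}) ∨
    (a = j ∧ ({c, d} : Multiset ℕ) = {b, i}) := by
  have ha : a ∈ ({b, i, j} : Multiset ℕ) := h ▸ (by simp)
  simp only [Multiset.insert_eq_cons, Multiset.mem_cons, Multiset.mem_singleton] at ha
  simp only [Multiset.insert_eq_cons] at h
  rcases ha with rfl | rfl | rfl
  · left
    exact ⟨rfl, by rwa [Multiset.cons_inj_right] at h⟩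
  · right; left
    refine ⟨rfl, ?_⟩
    rw [Multiset.cons_swap b a, Multiset.cons_inj_right] at h
    exact h
  · right; right
    refine ⟨rfl, ?_⟩
    rw [show ({a} : Multiset ℕ) = a ::ₘ 0 from rfl, Multiset.cons_swap i a,
      Multiset.cons_swap b a, Multiset.cons_inj_right] at h
    simpa using h

lemma msum3 (a b c : ℕ) : (({a, b, c} : Multiset ℕ).map eps).sum = eps a + eps b + eps c := by
  simp [Multiset.insert_eq_cons, add_assoc]

lemma msum2 (a b : ℕ) : (({a, b} : Multiset ℕ).map eps).sum = eps a + eps b := by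
  simp [Multiset.insert_eq_cons]

lemma msum1 (a : ℕ) : (({a} : Multiset ℕ).map eps).sum = eps a := by simp

lemma msum4 (a b c d : ℕ) :
    (({a, b, c, d} : Multiset ℕ).map eps).sum = eps a + eps b + eps c + eps d := by
  simp [Multiset.insert_eq_cons, add_assoc]

lemma ms3 {a c d b i j : ℕ} (h : eps a + eps c + eps d = eps b + eps i + eps j) :
    ({a, c, d} : Multiset ℕ) = {b, i, j} :=
  eps_msum_inj (by rw [msum3, msum3]; linear_combination h)

lemma ms2 {a b x y : ℕ} (h : eps a + eps b = eps x + eps y) :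
    ({a, b} : Multiset ℕ) = {x, y} :=
  eps_msum_inj (by rw [msum2, msum2]; linear_combination h)

lemma ms13 {a b i j : ℕ} (h : eps a = eps b + eps i + eps j) : False := by
  have h2 : ({a} : Multiset ℕ) = {b, i, j} :=
    eps_msum_inj (by rw [msum1, msum3]; linear_combination h)
  have := congrArg Multiset.card h2
  simp at this

lemma ms24 {a c b d i j : ℕ} (h : eps a + eps c = eps b + eps d + eps i + eps j) : False := by
  have h2 : ({a, c} : Multiset ℕ) = {b, d, i, j} :=
    eps_msum_inj (by rw [msum2, msum4]; linear_combination h)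
  have := congrArg Multiset.card h2
  simp at this

lemma ms42 {a b c d i j : ℕ} (h : eps a + eps b + eps c + eps d = eps i + eps j) : False := by
  have h2 : ({a, b, c, d} : Multiset ℕ) = {i, j} :=
    eps_msum_inj (by rw [msum4, msum2]; linear_combination h)
  have := congrArg Multiset.card h2
  simp at this

open scoped Classical

noncomputable def f1 (i j l : ℕ) : Sym2 (ℕ → ℝ) := s(eps i - eps l, eps l + eps j)
noncomputable def f2 (i j l : ℕ) : Sym2 (ℕ → ℝ) := s(eps i - eps l, eps j + eps l)
noncomputable def f3 (i j l : ℕ) : Sym2 (ℕ → ℝ) := s(eps i + eps l, eps j - eps l)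

noncomputable def FD (n i j : ℕ) : Finset (Sym2 (ℕ → ℝ)) :=
  (Finset.Ioo i j).image (f1 i j) ∪ (Finset.Ioc j n).image (f2 i j) ∪
    (Finset.Ioc j n).image (f3 i j)

lemma classify_s10 {n i j a b c d : ℕ} (hij : i < j) (hj : j ≤ n)
    (hab : a < b) (hbn : b ≤ n) (hcd : c < d) (hdn : d ≤ n)
    (h : (eps a - eps b) + (eps c + eps d) = eps i + eps j) :
    s(eps a - eps b, eps c + eps d) ∈ FD n i j := by
  have h3 : ({a, c, d} : Multiset ℕ) = {b, i, j} := ms3 (by linear_combination h)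
  rcases triple_eq h3 with ⟨h4, h2⟩ | ⟨h4, h2⟩ | ⟨h4, h2⟩
  · omega
  · rcases pair_eq h2 with ⟨h5, h6⟩ | ⟨h5, h6⟩
    · -- a = i, c = b, d = j : type 1, b ∈ Ioo i j
      rw [h4, h5, h6]
      exact Finset.mem_union_left _ (Finset.mem_union_left _
        (Finset.mem_image.mpr ⟨b, Finset.mem_Ioo.mpr ⟨by omega, by omega⟩, rfl⟩))
    · -- a = i, c = j, d = b : type 2, b ∈ Ioc j n
      rw [h4, h5, h6]
      exact Finset.mem_union_left _ (Finset.mem_union_right _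
        (Finset.mem_image.mpr ⟨b, Finset.mem_Ioc.mpr ⟨by omega, by omega⟩, rfl⟩))
  · rcases pair_eq h2 with ⟨h5, h6⟩ | ⟨h5, h6⟩
    · omega
    · -- a = j, c = i, d = b : type 3, b ∈ Ioc j n
      rw [h4, h5, h6]
      refine Finset.mem_union_right _
        (Finset.mem_image.mpr ⟨b, Finset.mem_Ioc.mpr ⟨by omega, by omega⟩, ?_⟩)
      exact Sym2.eq_swap

lemma inj1 {i j l l' : ℕ} (hl : i < l) (hl2 : l < j) (hl' : i < l') (hl'2 : l' < j)
    (h : f1 i j l = f1 i j l') : l = l' := by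
  rw [f1, f1, Sym2.eq_iff] at h
  rcases h with ⟨h1, h2⟩ | ⟨h1, h2⟩
  · have := pair_eq (ms2 (a := l) (b := j) (x := l') (y := j) (by linear_combination h2))
    omega
  · exact (ms13 (a := i) (b := l') (i := j) (j := l) (by linear_combination h1)).elim

lemma inj2 {i j l l' : ℕ} (hij : i < j) (hl : j < l) (hl' : j < l')
    (h : f2 i j l = f2 i j l') : l = l' := by
  rw [f2, f2, Sym2.eq_iff] at h
  rcases h with ⟨h1, h2⟩ | ⟨h1, h2⟩
  · have := pair_eq (ms2 (a := j) (b := l) (x := j) (y := l') (by linear_combination h2))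
    omega
  · exact (ms13 (a := i) (b := j) (i := l') (j := l) (by linear_combination h1)).elim

lemma inj3 {i j l l' : ℕ} (hij : i < j) (hl : j < l) (hl' : j < l')
    (h : f3 i j l = f3 i j l') : l = l' := by
  rw [f3, f3, Sym2.eq_iff] at h
  rcases h with ⟨h1, h2⟩ | ⟨h1, h2⟩
  · have := pair_eq (ms2 (a := i) (b := l) (x := i) (y := l') (by linear_combination h1))
    omega
  · exact (ms13 (a := j) (b := i) (i := l) (j := l') (by linear_combination h2)).elim

lemma d12 {i j l l' : ℕ} (hl : i < l) (hl2 : l < j) (hl' : j < l')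
    (h : f1 i j l = f2 i j l') : False := by
  rw [f1, f2, Sym2.eq_iff] at h
  rcases h with ⟨h1, h2⟩ | ⟨h1, h2⟩
  · have := pair_eq (ms2 (a := l) (b := j) (x := j) (y := l') (by linear_combination h2))
    omega
  · exact ms13 (a := i) (b := j) (i := l') (j := l) (by linear_combination h1)

lemma d13 {i j l l' : ℕ} (hij : i < j) (hl : i < l) (hl2 : l < j) (hl' : j < l')
    (h : f1 i j l = f3 i j l') : False := by
  rw [f1, f3, Sym2.eq_iff] at h
  rcases h with ⟨h1, h2⟩ | ⟨h1, h2⟩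
  · exact ms13 (a := i) (b := i) (i := l') (j := l) (by linear_combination h1)
  · have := pair_eq (ms2 (a := i) (b := l') (x := j) (y := l) (by linear_combination h1))
    omega

lemma d23 {i j l l' : ℕ} (hij : i < j) (hl : j < l) (hl' : j < l')
    (h : f2 i j l = f3 i j l') : False := by
  rw [f2, f3, Sym2.eq_iff] at h
  rcases h with ⟨h1, h2⟩ | ⟨h1, h2⟩
  · exact ms13 (a := i) (b := i) (i := l') (j := l) (by linear_combination h1)
  · have := pair_eq (ms2 (a := i) (b := l') (x := j) (y := l) (by linear_combination h1))
    omega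

/-- In `D_n`, for `β = ε_i + ε_j` with `1 ≤ i < j ≤ n`, the number of unordered pairs of
positive roots summing to `β` equals `2n - i - j - 1`. -/
theorem stmt10 (n i j : ℕ) (hi : 1 ≤ i) (hij : i < j) (hj : j ≤ n) :
    Set.ncard {p : Sym2 (ℕ → ℝ) | ∃ α γ : ℕ → ℝ,
        p = s(α, γ) ∧ α ∈ PosD n ∧ γ ∈ PosD n ∧ α + γ = eps i + eps j}
      = 2 * n - i - j - 1 := by
  have hset : {p : Sym2 (ℕ → ℝ) | ∃ α γ : ℕ → ℝ,
      p = s(α, γ) ∧ α ∈ PosD n ∧ γ ∈ PosD n ∧ α + γ = eps i + eps j} = ↑(FD n i j) := by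
    ext p
    simp only [Set.mem_setOf_eq, Finset.mem_coe]
    constructor
    · rintro ⟨α, γ, rfl, hα, hγ, hsum⟩
      obtain ⟨a, b, ha1, hab, hbn, hαeq⟩ := hα
      obtain ⟨c, d, hc1, hcd, hdn, hγeq⟩ := hγ
      rcases hαeq with rfl | rfl <;> rcases hγeq with rfl | rfl
      · exact (ms24 (a := a) (c := c) (b := b) (d := d) (i := i) (j := j)
          (by linear_combination hsum)).elim
      · exact classify_s10 hij hj hab hbn hcd hdn hsum
      · rw [Sym2.eq_swap]
        exact classify_s10 hij hj hcd hdn hab hbn (by linear_combination hsum)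
      · exact (ms42 (a := a) (b := b) (c := c) (d := d) (i := i) (j := j) (by linear_combination hsum)).elim
    · intro hp
      rw [FD] at hp
      simp only [Finset.mem_union, Finset.mem_image, Finset.mem_Ioo, Finset.mem_Ioc] at hp
      rcases hp with (⟨l, ⟨hl1, hl2⟩, rfl⟩ | ⟨l, ⟨hl1, hl2⟩, rfl⟩) | ⟨l, ⟨hl1, hl2⟩, rfl⟩
      · exact ⟨eps i - eps l, eps l + eps j, rfl, ⟨i, l, hi, hl1, by omega, Or.inl rfl⟩,
          ⟨l, j, by omega, hl2, hj, Or.inr rfl⟩, by ring⟩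
      · exact ⟨eps i - eps l, eps j + eps l, rfl, ⟨i, l, hi, by omega, hl2, Or.inl rfl⟩,
          ⟨j, l, by omega, hl1, hl2, Or.inr rfl⟩, by ring⟩
      · exact ⟨eps i + eps l, eps j - eps l, rfl, ⟨i, l, hi, by omega, hl2, Or.inr rfl⟩,
          ⟨j, l, by omega, hl1, hl2, Or.inl rfl⟩, by ring⟩
  have hd12 : Disjoint ((Finset.Ioo i j).image (f1 i j)) ((Finset.Ioc j n).image (f2 i j)) := by
    rw [Finset.disjoint_left]
    intro p hp1 hp2
    obtain ⟨l, hl, rfl⟩ := Finset.mem_image.mp hp1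
    obtain ⟨l', hl', heq⟩ := Finset.mem_image.mp hp2
    rw [Finset.mem_Ioo] at hl; rw [Finset.mem_Ioc] at hl'
    exact d12 hl.1 hl.2 hl'.1 heq.symm
  have hd13 : Disjoint ((Finset.Ioo i j).image (f1 i j)) ((Finset.Ioc j n).image (f3 i j)) := by
    rw [Finset.disjoint_left]
    intro p hp1 hp2
    obtain ⟨l, hl, rfl⟩ := Finset.mem_image.mp hp1
    obtain ⟨l', hl', heq⟩ := Finset.mem_image.mp hp2
    rw [Finset.mem_Ioo] at hl; rw [Finset.mem_Ioc] at hl'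
    exact d13 hij hl.1 hl.2 hl'.1 heq.symm
  have hd23 : Disjoint ((Finset.Ioc j n).image (f2 i j)) ((Finset.Ioc j n).image (f3 i j)) := by
    rw [Finset.disjoint_left]
    intro p hp1 hp2
    obtain ⟨l, hl, rfl⟩ := Finset.mem_image.mp hp1
    obtain ⟨l', hl', heq⟩ := Finset.mem_image.mp hp2
    rw [Finset.mem_Ioc] at hl; rw [Finset.mem_Ioc] at hl'
    exact d23 hij hl.1 hl'.1 heq.symm
  have hc1 : ((Finset.Ioo i j).image (f1 i j)).card = j - i - 1 := by
    rw [Finset.card_image_of_injOn, Nat.card_Ioo]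
    intro l hl l' hl' heq
    rw [Finset.coe_Ioo, Set.mem_Ioo] at hl hl'
    exact inj1 hl.1 hl.2 hl'.1 hl'.2 heq
  have hc2 : ((Finset.Ioc j n).image (f2 i j)).card = n - j := by
    rw [Finset.card_image_of_injOn, Nat.card_Ioc]
    intro l hl l' hl' heq
    rw [Finset.coe_Ioc, Set.mem_Ioc] at hl hl'
    exact inj2 hij hl.1 hl'.1 heq
  have hc3 : ((Finset.Ioc j n).image (f3 i j)).card = n - j := by
    rw [Finset.card_image_of_injOn, Nat.card_Ioc]
    intro l hl l' hl' heq
    rw [Finset.coe_Ioc, Set.mem_Ioc] at hl hl'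
    exact inj3 hij hl.1 hl'.1 heq
  rw [hset, Set.ncard_coe_finset, FD]
  rw [Finset.card_union_of_disjoint (Finset.disjoint_union_left.mpr ⟨hd13, hd23⟩),
    Finset.card_union_of_disjoint hd12, hc1, hc2, hc3]
  omega
end

section
/- Let Φ ∈ {B_n, C_n, D_n}, and let α, γ, β ∈ Φ⁺ with α + γ = β. Exactly one of α, γ lies in S⁺(β) and the other in S⁻(β), where S⁺(β) consists of the summands sharing the column of β (with the stated modification for β = 2ε_i in C_n, where S⁺(2ε_i) = {ε_i + ε_l : i < l ≤ n}). -/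
/-- The column of a root: the least index of a nonzero coordinate. -/
noncomputable def colv (v : ℕ → ℝ) : ℕ := sInf {k | v k ≠ 0}

open Classical in
/-- `S⁺(β)`: for `Φ = C_n` and `β = 2ε_i` it is `{ε_i + ε_l : i < l ≤ n}`; otherwise it is
`S(β) ∩ C_{col β}`, the `β`-singular summands lying in the column of `β`. -/
noncomputable def Splus (n : ℕ) (Pos : Set (ℕ → ℝ)) (β : ℕ → ℝ) : Set (ℕ → ℝ) :=
  if Pos = PosC n ∧ ∃ i : ℕ, 1 ≤ i ∧ i ≤ n ∧ β = (2 : ℝ) • eps i then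
    {v | ∃ i l : ℕ, β = (2 : ℝ) • eps i ∧ i < l ∧ l ≤ n ∧ v = eps i + eps l}
  else {γ ∈ Pos | β - γ ∈ Pos ∧ colv γ = colv β}

/-- `S⁻(β) = S(β) \ S⁺(β)`. -/
noncomputable def Sminus (n : ℕ) (Pos : Set (ℕ → ℝ)) (β : ℕ → ℝ) : Set (ℕ → ℝ) :=
  {γ ∈ Pos | β - γ ∈ Pos} \ Splus n Pos β

lemma eps_apply (i k : ℕ) : eps i k = if k = i then 1 else 0 := rfl

lemma colv_eq {v : ℕ → ℝ} {m : ℕ} (h0 : ∀ k < m, v k = 0) (hm : v m ≠ 0) :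
    colv v = m := by
  have hmem : m ∈ {k | v k ≠ 0} := hm
  refine le_antisymm (Nat.sInf_le hmem) ?_
  by_contra h
  push_neg at h
  exact (Nat.sInf_mem ⟨m, hmem⟩) (h0 _ h)

lemma colv_diff {i j : ℕ} (hij : i < j) : colv (eps i - eps j) = i := by
  apply colv_eq
  · intro k hk
    simp only [Pi.sub_apply, eps_apply]
    rw [if_neg (by omega), if_neg (by omega)]; ring
  · simp only [Pi.sub_apply, eps_apply]
    rw [if_neg (by omega : ¬ i = j)]
    simp

lemma colv_add {i j : ℕ} (hij : i < j) : colv (eps i + eps j) = i := by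
  apply colv_eq
  · intro k hk
    simp only [Pi.add_apply, eps_apply]
    rw [if_neg (by omega), if_neg (by omega)]; ring
  · simp only [Pi.add_apply, eps_apply]
    rw [if_neg (by omega : ¬ i = j)]
    simp

lemma colv_eps (i : ℕ) : colv (eps i) = i := by
  apply colv_eq
  · intro k hk
    simp only [eps_apply]
    rw [if_neg (by omega)]
  · simp only [eps_apply, if_pos rfl]; norm_num

lemma colv_two (i : ℕ) : colv ((2 : ℝ) • eps i) = i := by
  apply colv_eq
  · intro k hk
    simp only [Pi.smul_apply, eps_apply, smul_eq_mul]
    rw [if_neg (by omega)]; ring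
  · simp only [Pi.smul_apply, eps_apply, if_pos rfl, smul_eq_mul]; norm_num

lemma mem_cases {n : ℕ} {Pos : Set (ℕ → ℝ)}
    (hPos : Pos = PosB n ∨ Pos = PosC n ∨ Pos = PosD n)
    {v : ℕ → ℝ} (hv : v ∈ Pos) :
    (∃ i j, 1 ≤ i ∧ i < j ∧ j ≤ n ∧ (v = eps i - eps j ∨ v = eps i + eps j)) ∨
    (Pos = PosB n ∧ ∃ i, 1 ≤ i ∧ i ≤ n ∧ v = eps i) ∨
    (Pos = PosC n ∧ ∃ i, 1 ≤ i ∧ i ≤ n ∧ v = (2 : ℝ) • eps i) := by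
  rcases hPos with h | h | h <;> subst h
  · rcases hv with h | h
    · exact Or.inl h
    · exact Or.inr (Or.inl ⟨rfl, h⟩)
  · rcases hv with h | h
    · exact Or.inl h
    · exact Or.inr (Or.inr ⟨rfl, h⟩)
  · exact Or.inl hv

lemma shape {n : ℕ} {Pos : Set (ℕ → ℝ)}
    (hPos : Pos = PosB n ∨ Pos = PosC n ∨ Pos = PosD n)
    {v : ℕ → ℝ} (hv : v ∈ Pos) :
    (∃ j, 1 ≤ colv v ∧ colv v < j ∧ j ≤ n ∧
      (v = eps (colv v) - eps j ∨ v = eps (colv v) + eps j)) ∨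
    (Pos = PosB n ∧ 1 ≤ colv v ∧ colv v ≤ n ∧ v = eps (colv v)) ∨
    (Pos = PosC n ∧ 1 ≤ colv v ∧ colv v ≤ n ∧ v = (2 : ℝ) • eps (colv v)) := by
  rcases mem_cases hPos hv with ⟨i, j, h1, h2, h3, h4 | h4⟩ | ⟨hP, i, h1, h2, h4⟩ |
      ⟨hP, i, h1, h2, h4⟩
  · subst h4; rw [colv_diff h2]; exact Or.inl ⟨j, h1, h2, h3, Or.inl rfl⟩
  · subst h4; rw [colv_add h2]; exact Or.inl ⟨j, h1, h2, h3, Or.inr rfl⟩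
  · subst h4; rw [colv_eps]; exact Or.inr (Or.inl ⟨hP, h1, h2, rfl⟩)
  · subst h4; rw [colv_two]; exact Or.inr (Or.inr ⟨hP, h1, h2, rfl⟩)

lemma zero_of_lt_colv {n : ℕ} {Pos : Set (ℕ → ℝ)}
    (hPos : Pos = PosB n ∨ Pos = PosC n ∨ Pos = PosD n)
    {v : ℕ → ℝ} (hv : v ∈ Pos) : ∀ k < colv v, v k = 0 := by
  intro k hk
  rcases shape hPos hv with ⟨j, h1, h2, h3, h4 | h4⟩ | ⟨hP, h1, h2, h4⟩ | ⟨hP, h1, h2, h4⟩ <;>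
    have hc := congrFun h4 k <;>
    simp only [Pi.sub_apply, Pi.add_apply, Pi.smul_apply, eps_apply, smul_eq_mul] at hc <;>
    rw [if_neg (by omega : ¬ k = colv v)] at hc
  · rw [if_neg (by omega : ¬ k = j)] at hc; rw [hc]; ring
  · rw [if_neg (by omega : ¬ k = j)] at hc; rw [hc]; ring
  · exact hc
  · rw [hc]; ring

lemma lead_colv {n : ℕ} {Pos : Set (ℕ → ℝ)}
    (hPos : Pos = PosB n ∨ Pos = PosC n ∨ Pos = PosD n)
    {v : ℕ → ℝ} (hv : v ∈ Pos) : v (colv v) = 1 ∨ v (colv v) = 2 := by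
  rcases shape hPos hv with ⟨j, h1, h2, h3, h4 | h4⟩ | ⟨hP, h1, h2, h4⟩ | ⟨hP, h1, h2, h4⟩ <;>
    have hc := congrFun h4 (colv v) <;>
    simp only [Pi.sub_apply, Pi.add_apply, Pi.smul_apply, eps_apply, smul_eq_mul,
      if_pos rfl] at hc
  · rw [if_neg (by omega : ¬ colv v = j)] at hc; rw [hc]; norm_num
  · rw [if_neg (by omega : ¬ colv v = j)] at hc; rw [hc]; norm_num
  · rw [hc]; norm_num
  · rw [hc]; norm_num

lemma eq_two_smul {n : ℕ} {Pos : Set (ℕ → ℝ)}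
    (hPos : Pos = PosB n ∨ Pos = PosC n ∨ Pos = PosD n)
    {v : ℕ → ℝ} (hv : v ∈ Pos) {k : ℕ} (hk : v k = 2) :
    v = (2 : ℝ) • eps k ∧ Pos = PosC n ∧ 1 ≤ k ∧ k ≤ n ∧ colv v = k := by
  rcases shape hPos hv with ⟨j, h1, h2, h3, h4 | h4⟩ | ⟨hP, h1, h2, h4⟩ | ⟨hP, h1, h2, h4⟩ <;>
    rw [h4] at hk <;>
    simp only [Pi.sub_apply, Pi.add_apply, Pi.smul_apply, eps_apply, smul_eq_mul] at hk <;>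
    split_ifs at hk <;> try norm_num at hk
  all_goals first
    | (exfalso; omega)
    | (rename_i ha; subst ha; exact ⟨h4, hP, h1, h2, rfl⟩)

lemma two_smul_eps_inj {i j : ℕ} (h : (2 : ℝ) • eps i = (2 : ℝ) • eps j) : i = j := by
  by_contra hij
  have hc := congrFun h i
  simp [eps_apply, hij] at hc

lemma PosB_ne_PosC {n : ℕ} (hn : 1 ≤ n) : PosB n ≠ PosC n := by
  intro h
  have h1 : eps 1 ∈ PosB n := Or.inr ⟨1, le_refl 1, hn, rfl⟩
  rw [h] at h1
  rcases h1 with ⟨i, j, hi, hij, hjn, hd | hd⟩ | ⟨i, hi, hin, hd⟩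
  · have hc := congrFun hd j
    simp only [Pi.sub_apply, eps_apply] at hc
    split_ifs at hc <;> first | omega | norm_num at hc
  · have hi1 : i = 1 := by
      have hci := congrFun hd i
      simp only [Pi.add_apply, eps_apply] at hci
      split_ifs at hci <;> norm_num at hci <;> omega
    have hj1 : j = 1 := by
      have hcj := congrFun hd j
      simp only [Pi.add_apply, eps_apply] at hcj
      split_ifs at hcj <;> norm_num at hcj <;> omega
    omega
  · have hc := congrFun hd i
    simp only [Pi.smul_apply, eps_apply, smul_eq_mul, if_pos rfl] at hc
    split_ifs at hc <;> norm_num at hc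

lemma main_lt {n : ℕ} {Pos : Set (ℕ → ℝ)}
    (hPos : Pos = PosB n ∨ Pos = PosC n ∨ Pos = PosD n)
    {α γ β : ℕ → ℝ} (hα : α ∈ Pos) (hγ : γ ∈ Pos) (hβ : β ∈ Pos) (hsum : α + γ = β)
    (hlt : colv α < colv γ) :
    α ∈ Splus n Pos β ∧ γ ∈ Sminus n Pos β ∧ γ ∉ Splus n Pos β := by
  have hβα : β - α = γ := by rw [← hsum]; ring
  have hβγ : β - γ = α := by rw [← hsum]; ring
  have happ : ∀ k, α k + γ k = β k := fun k => congrFun hsum k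
  have hγ0 := zero_of_lt_colv hPos hγ
  have hα0 := zero_of_lt_colv hPos hα
  have hαl := lead_colv hPos hα
  have hβa : β (colv α) = α (colv α) := by
    rw [← happ, hγ0 _ hlt]; ring
  have hcolβ : colv β = colv α := by
    apply colv_eq
    · intro k hk
      rw [← happ, hα0 _ hk, hγ0 _ (hk.trans hlt)]; ring
    · rw [hβa]; rcases hαl with h | h <;> rw [h] <;> norm_num
  have hcond : ¬(Pos = PosC n ∧ ∃ i : ℕ, 1 ≤ i ∧ i ≤ n ∧ β = (2 : ℝ) • eps i) := by
    rintro ⟨hPC, i, hi1, hin, hβ2⟩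
    have hia : i = colv α := by rw [← hcolβ, hβ2, colv_two]
    subst hia
    have hβ2a : β (colv α) = 2 := by
      rw [hβ2]; simp [eps_apply]
    have hα2 : α (colv α) = 2 := by rw [← hβa, hβ2a]
    obtain ⟨hαeq, -, -, -, -⟩ := eq_two_smul hPos hα hα2
    have hβc : β (colv γ) = 0 := by
      rw [hβ2]
      simp only [Pi.smul_apply, eps_apply, smul_eq_mul]
      rw [if_neg (by omega : ¬ colv γ = colv α)]; ring
    have hαc : α (colv γ) = 0 := by
      rw [hαeq]
      simp only [Pi.smul_apply, eps_apply, smul_eq_mul]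
      rw [if_neg (by omega : ¬ colv γ = colv α)]; ring
    have hh := happ (colv γ)
    rw [hαc, hβc] at hh
    rcases lead_colv hPos hγ with h | h <;> rw [h] at hh <;> norm_num at hh
  have hSp : Splus n Pos β = {g ∈ Pos | β - g ∈ Pos ∧ colv g = colv β} := by
    rw [Splus, if_neg hcond]
  have hγnot : γ ∉ Splus n Pos β := by
    rw [hSp]
    rintro ⟨-, -, hc⟩
    omega
  refine ⟨?_, ⟨⟨hγ, ?_⟩, hγnot⟩, hγnot⟩
  · rw [hSp]
    exact ⟨hα, by rw [hβα]; exact hγ, hcolβ.symm⟩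
  · rw [hβγ]; exact hα

/-- If `α + γ = β` with `α, γ, β ∈ Φ⁺` for `Φ ∈ {B_n, C_n, D_n}`, then exactly one of `α, γ`
lies in `S⁺(β)` and the other in `S⁻(β)`. -/
theorem stmt19 (n : ℕ) (Pos : Set (ℕ → ℝ))
    (hPos : Pos = PosB n ∨ Pos = PosC n ∨ Pos = PosD n)
    (α γ β : ℕ → ℝ) (hα : α ∈ Pos) (hγ : γ ∈ Pos) (hβ : β ∈ Pos) (hsum : α + γ = β) :
    Xor' (α ∈ Splus n Pos β ∧ γ ∈ Sminus n Pos β)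
         (γ ∈ Splus n Pos β ∧ α ∈ Sminus n Pos β) := by
  rcases Nat.lt_trichotomy (colv α) (colv γ) with hlt | heq | hgt
  · obtain ⟨h1, h2, h3⟩ := main_lt hPos hα hγ hβ hsum hlt
    exact Or.inl ⟨⟨h1, h2⟩, fun h => h3 h.1⟩
  · -- equal columns: the special C_n case β = 2ε_a
    have happ : ∀ k, α k + γ k = β k := fun k => congrFun hsum k
    have hα0 := zero_of_lt_colv hPos hα
    have hγ0 := zero_of_lt_colv hPos hγ
    have hαl := lead_colv hPos hα
    have hγl := lead_colv hPos hγ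
    rw [← heq] at hγl hγ0
    have hcolβ : colv β = colv α := by
      apply colv_eq
      · intro k hk; rw [← happ, hα0 _ hk, hγ0 _ hk]; ring
      · rw [← happ]
        rcases hαl with h | h <;> rcases hγl with h' | h' <;> rw [h, h'] <;> norm_num
    have hβl := lead_colv hPos hβ
    rw [hcolβ, ← happ] at hβl
    have hav : α (colv α) = 1 ∧ γ (colv α) = 1 := by
      rcases hαl with h | h <;> rcases hγl with h' | h' <;> rcases hβl with h'' | h'' <;>
        exact ⟨by linarith, by linarith⟩
    have hβ2 : β (colv α) = 2 := by rw [← happ, hav.1, hav.2]; norm_num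
    obtain ⟨hβeq, hPC, h1a, han, -⟩ := eq_two_smul hPos hβ hβ2
    have hcond : Pos = PosC n ∧ ∃ i : ℕ, 1 ≤ i ∧ i ≤ n ∧ β = (2 : ℝ) • eps i :=
      ⟨hPC, colv α, h1a, han, hβeq⟩
    have hSp : Splus n Pos β =
        {v | ∃ i l : ℕ, β = (2 : ℝ) • eps i ∧ i < l ∧ l ≤ n ∧ v = eps i + eps l} := by
      rw [Splus, if_pos hcond]
    have hβα : β - α = γ := by rw [← hsum]; ring
    have hβγ : β - γ = α := by rw [← hsum]; ring
    rcases mem_cases (Or.inr (Or.inl hPC)) hα with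
        ⟨i, j, hi1, hij, hjn, h4 | h4⟩ | ⟨hPB, -⟩ | ⟨-, i, -, -, h4⟩
    · -- α = ε_i - ε_j ; i = colv α ; γ = ε_i + ε_j
      have hia : colv α = i := by rw [h4, colv_diff hij]
      rw [hia] at hβeq
      have hγeq : γ = eps i + eps j := by
        rw [← hβα, hβeq, h4]
        funext k
        simp only [Pi.sub_apply, Pi.add_apply, Pi.smul_apply, eps_apply, smul_eq_mul]
        split_ifs <;> norm_num
      have hγSp : γ ∈ Splus n Pos β := by
        rw [hSp]; exact ⟨i, j, hβeq, hij, hjn, hγeq⟩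
      have hαnot : α ∉ Splus n Pos β := by
        rw [hSp]
        rintro ⟨i', l, hβ', hil, hln, hα'⟩
        obtain rfl : i' = i := two_smul_eps_inj (hβ'.symm.trans hβeq)
        have hc := congrFun (h4.symm.trans hα') j
        simp only [Pi.sub_apply, Pi.add_apply, eps_apply] at hc
        split_ifs at hc <;> norm_num at hc
      exact Or.inr ⟨⟨hγSp, ⟨⟨hα, by rw [hβα]; exact hγ⟩, hαnot⟩⟩, fun h => hαnot h.1⟩
    · -- α = ε_i + ε_j ; γ = ε_i - ε_j
      have hia : colv α = i := by rw [h4, colv_add hij]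
      rw [hia] at hβeq
      have hγeq : γ = eps i - eps j := by
        rw [← hβα, hβeq, h4]
        funext k
        simp only [Pi.sub_apply, Pi.add_apply, Pi.smul_apply, eps_apply, smul_eq_mul]
        split_ifs <;> norm_num
      have hαSp : α ∈ Splus n Pos β := by
        rw [hSp]; exact ⟨i, j, hβeq, hij, hjn, h4⟩
      have hγnot : γ ∉ Splus n Pos β := by
        rw [hSp]
        rintro ⟨i', l, hβ', hil, hln, hγ'⟩
        obtain rfl : i' = i := two_smul_eps_inj (hβ'.symm.trans hβeq)
        have hc := congrFun (hγeq.symm.trans hγ') j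
        simp only [Pi.sub_apply, Pi.add_apply, eps_apply] at hc
        split_ifs at hc <;> norm_num at hc
      exact Or.inl ⟨⟨hαSp, ⟨⟨hγ, by rw [hβγ]; exact hα⟩, hγnot⟩⟩, fun h => hγnot h.1⟩
    · -- Pos = PosB n contradicts Pos = PosC n
      exact absurd (hPB.symm.trans hPC) (PosB_ne_PosC (h1a.trans han))
    · -- α = 2ε_i contradicts α(colv α) = 1
      have hc := congrFun h4 (colv α)
      rw [hav.1] at hc
      simp only [Pi.smul_apply, eps_apply, smul_eq_mul] at hc
      split_ifs at hc <;> norm_num at hc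
  · obtain ⟨h1, h2, h3⟩ := main_lt hPos hγ hα hβ (by rw [← hsum]; ring) hgt
    exact Or.inr ⟨⟨h1, h2⟩, fun h => h3 h.1⟩
end
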